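/- arXiv:2010.06861 — 5 statements merged into one kernel-verified Lean document; each statement's English description precedes it below -/
import Mathlib

section
/- Let A : [0,∞) → M_d(ℝ) be continuous, let A* ∈ M_d(ℝ), and let Ψ(·,s) be the principal matrix solution of Ẏ(t) = A(t)Y(t) with Ψ(s,s) = I_d. Assume there are constants ρ > 0, Γ₁ ≥ 1, Γ₂ ≥ 1 and L ≥ 0 such that: ‖exp(uA*)‖ ≤ Γ₂·e^{−ρu/2} for all u ≥ 0; ‖Ψ(t,s)‖ ≤ Γ₂·e^{−ρ(t−s)/2} for all t ≥ s ≥ 0; and ‖A(r) − A*‖ ≤ L·Γ₁·e^{−ρr/2} for all r ≥ 0. Then for all t ≥ u ≥ 0: ‖Ψ(t, t−u) − exp(uA*)‖ ≤ 2ρ⁻¹·Γ₁·Γ₂²·L·e^{−ρ(t−u)/2}. In particular, for each fixed u ≥ 0, Ψ(t, t−u) → exp(uA*) as t → ∞. -/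
open Set Filter

set_option maxHeartbeats 1000000
set_option synthInstance.maxHeartbeats 200000

/-- If `Ψ(·,s)` is the principal solution of `Ẏ = A(t)Y`, with
`‖exp(uA*)‖ ≤ Γ₂e^{−ρu/2}`, `‖Ψ(t,s)‖ ≤ Γ₂e^{−ρ(t−s)/2}` and
`‖A(r) − A*‖ ≤ LΓ₁e^{−ρr/2}`, then for all `t ≥ u ≥ 0`,
`‖Ψ(t,t−u) − exp(uA*)‖ ≤ 2ρ⁻¹Γ₁Γ₂²L e^{−ρ(t−u)/2}`; in particular
`Ψ(t,t−u) → exp(uA*)` as `t → ∞`. Matrices are represented as operators on `ℝ^d`. -/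
theorem stmt9
    (d : ℕ) (hd : 1 ≤ d)
    (A : ℝ → (EuclideanSpace ℝ (Fin d) →L[ℝ] EuclideanSpace ℝ (Fin d)))
    (hA : ContinuousOn A (Ici (0 : ℝ)))
    (Astar : EuclideanSpace ℝ (Fin d) →L[ℝ] EuclideanSpace ℝ (Fin d))
    (Ψ : ℝ → ℝ → (EuclideanSpace ℝ (Fin d) →L[ℝ] EuclideanSpace ℝ (Fin d)))
    (hΨinit : ∀ s ≥ (0 : ℝ), Ψ s s = ContinuousLinearMap.id ℝ _)
    (hΨode : ∀ s ≥ (0 : ℝ), ∀ t ≥ (0 : ℝ),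
      HasDerivAt (fun u => Ψ u s) ((A t).comp (Ψ t s)) t)
    (ρ Γ₁ Γ₂ L : ℝ) (hρ : 0 < ρ) (hΓ₁ : 1 ≤ Γ₁) (hΓ₂ : 1 ≤ Γ₂) (hL : 0 ≤ L)
    (hexp : ∀ u ≥ (0 : ℝ),
      ‖NormedSpace.exp (u • Astar)‖ ≤ Γ₂ * Real.exp (-ρ * u / 2))
    (hΨbound : ∀ s t : ℝ, 0 ≤ s → s ≤ t →
      ‖Ψ t s‖ ≤ Γ₂ * Real.exp (-ρ * (t - s) / 2))
    (hAbound : ∀ r ≥ (0 : ℝ), ‖A r - Astar‖ ≤ L * Γ₁ * Real.exp (-ρ * r / 2)) :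
    (∀ t u : ℝ, 0 ≤ u → u ≤ t →
      ‖Ψ t (t - u) - NormedSpace.exp (u • Astar)‖
        ≤ 2 * ρ⁻¹ * Γ₁ * Γ₂ ^ 2 * L * Real.exp (-ρ * (t - u) / 2)) ∧
    (∀ u ≥ (0 : ℝ),
      Tendsto (fun t => Ψ t (t - u)) atTop (nhds (NormedSpace.exp (u • Astar)))) := by
  have key : ∀ t u : ℝ, 0 ≤ u → u ≤ t →
      ‖Ψ t (t - u) - NormedSpace.exp (u • Astar)‖
        ≤ 2 * ρ⁻¹ * Γ₁ * Γ₂ ^ 2 * L * Real.exp (-ρ * (t - u) / 2) := by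
    intro t u hu hut
    have hΓ₁0 : (0:ℝ) ≤ Γ₁ := by linarith
    have hΓ₂0 : (0:ℝ) ≤ Γ₂ := by linarith
    have hρi : (0:ℝ) < ρ⁻¹ := inv_pos.mpr hρ
    set s : ℝ := t - u with hs_def
    have hs : 0 ≤ s := by simp [hs_def]; linarith
    have hst : s ≤ t := by simp [hs_def]; linarith
    -- derivative of the comparison function
    set G' : ℝ → (EuclideanSpace ℝ (Fin d) →L[ℝ] EuclideanSpace ℝ (Fin d)) :=
      fun r => NormedSpace.exp ((t - r) • Astar) * ((A r - Astar) * Ψ r s) with hG'def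
    have hG : ∀ r ∈ uIcc s t,
        HasDerivAt (fun r => NormedSpace.exp ((t - r) • Astar) * Ψ r s) (G' r) r := by
      intro r hr
      rw [uIcc_of_le hst] at hr
      have hr0 : (0 : ℝ) ≤ r := le_trans hs hr.1
      have h1 : HasDerivAt (fun r : ℝ => NormedSpace.exp ((t - r) • Astar))
          (-(NormedSpace.exp ((t - r) • Astar) * Astar)) r := by
        have := (hasDerivAt_exp_smul_const (𝕂 := ℝ) Astar (t - r)).scomp r
          ((hasDerivAt_id r).const_sub t)
        simpa [Function.comp_def] using this
      have h2 : HasDerivAt (fun r => Ψ r s) (A r * Ψ r s) r := hΨode s hs r hr0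
      have h3 := h1.mul h2
      have heq : -(NormedSpace.exp ((t - r) • Astar) * Astar) * Ψ r s +
          NormedSpace.exp ((t - r) • Astar) * (A r * Ψ r s) = G' r := by
        simp only [hG'def]
        ext x
        simp [ContinuousLinearMap.mul_apply, map_sub]
        abel
      exact heq ▸ h3
    -- continuity of G' on [s, t]
    have hcont : ContinuousOn G' (uIcc s t) := by
      rw [uIcc_of_le hst]
      have c1 : Continuous fun r : ℝ => NormedSpace.exp ((t - r) • Astar) :=
        continuous_iff_continuousAt.2 fun r => ((hasDerivAt_exp_smul_const (𝕂 := ℝ) Astar (t - r)).scomp r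
          ((hasDerivAt_id r).const_sub t)).continuousAt
      have c2 : ContinuousOn (fun r => A r - Astar) (Icc s t) :=
        (hA.mono fun r hr => le_trans hs hr.1).sub continuousOn_const
      have c3 : ContinuousOn (fun r => Ψ r s) (Icc s t) := fun r hr =>
        (hΨode s hs r (le_trans hs hr.1)).continuousAt.continuousWithinAt
      exact c1.continuousOn.mul (c2.mul c3)
    have hint : IntervalIntegrable G' MeasureTheory.volume s t :=
      (hcont.mono (by rw [uIcc_of_le hst])).intervalIntegrable
    -- FTC
    have hftc : ∫ r in s..t, G' r = Ψ t s - NormedSpace.exp (u • Astar) := by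
      rw [intervalIntegral.integral_eq_sub_of_hasDerivAt hG hint]
      have e1 : NormedSpace.exp ((t - t) • Astar) = 1 := by
        rw [sub_self, show (0:ℝ) • Astar = 0 from zero_smul ℝ Astar, NormedSpace.exp_zero]
      have e2 : Ψ s s = 1 := by
        rw [hΨinit s hs]; rfl
      have e3 : t - s = u := by simp [hs_def]
      rw [e1, e2, e3, one_mul, mul_one]
    -- pointwise norm bound
    set K : ℝ := Γ₁ * Γ₂ ^ 2 * L * Real.exp ((ρ * s - ρ * t) / 2) with hKdef
    have hK0 : 0 ≤ K := by positivity
    have hbound : ∀ r ∈ Icc s t, ‖G' r‖ ≤ K * Real.exp (-ρ * r / 2) := by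
      intro r hr
      have hr0 : (0 : ℝ) ≤ r := le_trans hs hr.1
      have b1 : ‖NormedSpace.exp ((t - r) • Astar)‖ ≤ Γ₂ * Real.exp (-ρ * (t - r) / 2) :=
        hexp (t - r) (by linarith [hr.2])
      have b2 : ‖A r - Astar‖ ≤ L * Γ₁ * Real.exp (-ρ * r / 2) := hAbound r hr0
      have b3 : ‖Ψ r s‖ ≤ Γ₂ * Real.exp (-ρ * (r - s) / 2) := hΨbound s r hs hr.1
      calc ‖G' r‖ ≤ ‖NormedSpace.exp ((t - r) • Astar)‖ * (‖A r - Astar‖ * ‖Ψ r s‖) :=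
            le_trans (norm_mul_le _ _) (by gcongr; exact norm_mul_le _ _)
        _ ≤ (Γ₂ * Real.exp (-ρ * (t - r) / 2)) * ((L * Γ₁ * Real.exp (-ρ * r / 2)) *
              (Γ₂ * Real.exp (-ρ * (r - s) / 2))) := by
            gcongr <;> positivity
        _ = K * Real.exp (-ρ * r / 2) := by
            have hE : Real.exp (-ρ * (t - r) / 2) * Real.exp (-ρ * r / 2) *
                Real.exp (-ρ * (r - s) / 2)
                = Real.exp ((ρ * s - ρ * t) / 2) * Real.exp (-ρ * r / 2) := by
              rw [← Real.exp_add, ← Real.exp_add, ← Real.exp_add]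
              congr 1
              ring
            rw [hKdef, show (Γ₂ * Real.exp (-ρ * (t - r) / 2)) * ((L * Γ₁ * Real.exp (-ρ * r / 2)) *
              (Γ₂ * Real.exp (-ρ * (r - s) / 2))) = Γ₁ * Γ₂ ^ 2 * L *
                (Real.exp (-ρ * (t - r) / 2) * Real.exp (-ρ * r / 2) *
                  Real.exp (-ρ * (r - s) / 2)) by ring, hE]
            ring
    -- integral of the bound
    have hFderiv : ∀ r : ℝ, HasDerivAt (fun r => K * (-2 / ρ) * Real.exp (-ρ * r / 2))
        (K * Real.exp (-ρ * r / 2)) r := by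
      intro r
      have hinner : HasDerivAt (fun r : ℝ => -ρ * r / 2) (-ρ / 2) r := by
        simpa using ((hasDerivAt_id r).const_mul (-ρ)).div_const 2
      have := (hinner.exp).const_mul (K * (-2 / ρ))
      refine this.congr_deriv ?_
      field_simp
    have hgint : IntervalIntegrable (fun r => K * Real.exp (-ρ * r / 2))
        MeasureTheory.volume s t := (Continuous.intervalIntegrable (by fun_prop) _ _)
    have hgval : ∫ r in s..t, K * Real.exp (-ρ * r / 2)
        = K * (-2 / ρ) * Real.exp (-ρ * t / 2) - K * (-2 / ρ) * Real.exp (-ρ * s / 2) :=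
      intervalIntegral.integral_eq_sub_of_hasDerivAt (fun r _ => hFderiv r) hgint
    -- put everything together
    have hmain : ‖Ψ t s - NormedSpace.exp (u • Astar)‖
        ≤ ∫ r in s..t, K * Real.exp (-ρ * r / 2) := by
      rw [← hftc]
      refine le_trans (intervalIntegral.norm_integral_le_integral_norm hst) ?_
      refine intervalIntegral.integral_mono_on hst (hint.norm) hgint ?_
      exact fun r hr => hbound r hr
    rw [hgval] at hmain
    refine le_trans hmain ?_
    have hKt : K * (-2 / ρ) * Real.exp (-ρ * t / 2) - K * (-2 / ρ) * Real.exp (-ρ * s / 2)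
        = (2 / ρ) * K * (Real.exp (-ρ * s / 2) - Real.exp (-ρ * t / 2)) := by ring
    rw [hKt]
    have h1 : Real.exp (-ρ * s / 2) - Real.exp (-ρ * t / 2) ≤ Real.exp (-ρ * s / 2) := by
      have := Real.exp_pos (-ρ * t / 2); linarith
    have h2 : (2 / ρ) * K * (Real.exp (-ρ * s / 2) - Real.exp (-ρ * t / 2))
        ≤ (2 / ρ) * K * Real.exp (-ρ * s / 2) := by
      apply mul_le_mul_of_nonneg_left h1; positivity
    refine le_trans h2 ?_
    have hKs : (2 / ρ) * K * Real.exp (-ρ * s / 2)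
        = 2 * ρ⁻¹ * Γ₁ * Γ₂ ^ 2 * L * Real.exp (-ρ * t / 2) := by
      rw [hKdef, show (2:ℝ) / ρ = 2 * ρ⁻¹ by rw [div_eq_mul_inv]]
      rw [show 2 * ρ⁻¹ * (Γ₁ * Γ₂ ^ 2 * L * Real.exp ((ρ * s - ρ * t) / 2)) *
          Real.exp (-ρ * s / 2) = 2 * ρ⁻¹ * Γ₁ * Γ₂ ^ 2 * L *
            (Real.exp ((ρ * s - ρ * t) / 2) * Real.exp (-ρ * s / 2)) by ring]
      rw [← Real.exp_add]
      congr 1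
      ring
    rw [hKs]
    have hCnn : (0:ℝ) ≤ 2 * ρ⁻¹ * Γ₁ * Γ₂ ^ 2 * L :=
      mul_nonneg (mul_nonneg (mul_nonneg (mul_nonneg (by norm_num) hρi.le) hΓ₁0)
        (sq_nonneg _)) hL
    have hee : Real.exp (-ρ * t / 2) ≤ Real.exp (-ρ * (t - u) / 2) :=
      Real.exp_le_exp.mpr (by nlinarith)
    exact mul_le_mul_of_nonneg_left hee hCnn
  refine ⟨key, fun u hu => ?_⟩
  rw [tendsto_iff_norm_sub_tendsto_zero]
  have hb : Tendsto (fun t : ℝ => 2 * ρ⁻¹ * Γ₁ * Γ₂ ^ 2 * L * Real.exp (-ρ * (t - u) / 2))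
      atTop (nhds 0) := by
    rw [show (0:ℝ) = 2 * ρ⁻¹ * Γ₁ * Γ₂ ^ 2 * L * 0 by ring]
    refine Tendsto.const_mul _ (Real.tendsto_exp_atBot.comp ?_)
    apply Tendsto.atBot_div_const (by norm_num : (0:ℝ) < 2)
    apply Tendsto.const_mul_atTop_of_neg (neg_neg_iff_pos.mpr hρ)
    exact tendsto_atTop_add_const_right _ _ tendsto_id
  refine squeeze_zero_norm' ?_ hb
  filter_upwards [eventually_ge_atTop u] with t ht
  rw [Real.norm_eq_abs, abs_of_nonneg (norm_nonneg _)]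
  exact key t u hu ht
end

section
/- Let N = (N(t))_{t≥0} be a standard Poisson process: N takes values in ℕ, has right-continuous sample paths, N(0) = 0 almost surely, and for all 0 ≤ s ≤ t the increment N(t) − N(s) is independent of (N(r))_{r ≤ s} and has the Poisson distribution with mean t − s. Then for all S > 0 and A > 0 with A ≤ 2·log(2)·S, one has ℙ( sup_{0 ≤ s ≤ S} |N(s) − s| ≥ A ) ≤ 2·exp(−A²/(4S)). -/
open Set MeasureTheory ProbabilityTheory


lemma exp_tsum' (x : ℝ) : ∑' n : ℕ, x ^ n / n.factorial = Real.exp x := by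
  rw [Real.exp_eq_exp_ℝ, NormedSpace.exp_eq_tsum_div]

lemma poisson_sum (m c : ℝ) (hm : 0 ≤ m) :
    ∑' k : ℕ, ENNReal.ofReal (Real.exp (c * k) * (Real.exp (-m) * m ^ k / (Nat.factorial k)))
      = ENNReal.ofReal (Real.exp (m * (Real.exp c - 1))) := by
  have hnn : ∀ k : ℕ, 0 ≤ Real.exp (c * k) * (Real.exp (-m) * m ^ k / (Nat.factorial k)) := by
    intro k
    positivity
  have hfun : ∀ k : ℕ, Real.exp (c * k) * (Real.exp (-m) * m ^ k / (Nat.factorial k))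
      = Real.exp (-m) * ((m * Real.exp c) ^ k / (Nat.factorial k)) := by
    intro k
    rw [mul_pow, ← Real.exp_nat_mul]
    ring_nf
  have hsum : Summable (fun k : ℕ => Real.exp (c * k) * (Real.exp (-m) * m ^ k / (Nat.factorial k))) := by
    simp_rw [hfun]
    exact (Real.summable_pow_div_factorial _).mul_left _
  rw [← ENNReal.ofReal_tsum_of_nonneg hnn hsum]
  congr 1
  calc ∑' k : ℕ, Real.exp (c * k) * (Real.exp (-m) * m ^ k / (Nat.factorial k))
      = ∑' k : ℕ, Real.exp (-m) * ((m * Real.exp c) ^ k / (Nat.factorial k)) := by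
        exact tsum_congr hfun
    _ = Real.exp (-m) * ∑' k : ℕ, ((m * Real.exp c) ^ k / (Nat.factorial k)) := by
        rw [tsum_mul_left]
    _ = Real.exp (-m) * Real.exp (m * Real.exp c) := by rw [exp_tsum']
    _ = Real.exp (m * (Real.exp c - 1)) := by rw [← Real.exp_add]; ring_nf


lemma mgf_incr {Ω : Type*} [MeasurableSpace Ω] (P : Measure Ω) [IsProbabilityMeasure P]
    (N : ℝ → Ω → ℕ) (hmeas : ∀ t : ℝ, Measurable (N t))
    (hdist : ∀ s t : ℝ, 0 ≤ s → s ≤ t → ∀ k : ℕ,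
      P {ω | (N t ω : ℤ) - (N s ω : ℤ) = (k : ℤ)}
        = ENNReal.ofReal (Real.exp (-(t - s)) * (t - s) ^ k / (Nat.factorial k)))
    (s t : ℝ) (hs : 0 ≤ s) (hst : s ≤ t) (c : ℝ) :
    Integrable (fun ω => Real.exp (c * ((((N t ω : ℤ) - (N s ω : ℤ) : ℤ)) : ℝ))) P ∧
    ∫ ω, Real.exp (c * ((((N t ω : ℤ) - (N s ω : ℤ) : ℤ)) : ℝ)) ∂P
      = Real.exp ((t - s) * (Real.exp c - 1)) := by
  have hm : 0 ≤ t - s := sub_nonneg.mpr hst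
  set D : Ω → ℤ := fun ω => (N t ω : ℤ) - (N s ω : ℤ) with hDdef
  have hD : Measurable D :=
    (measurable_from_top.comp (hmeas t)).sub (measurable_from_top.comp (hmeas s))
  set U : ℕ → Set Ω := fun k => D ⁻¹' {(k : ℤ)} with hUdef
  have hU : ∀ k, MeasurableSet (U k) := fun k => hD (measurableSet_singleton _)
  have hdisj : Pairwise (Function.onFun Disjoint U) := by
    intro i j hij
    simp only [Function.onFun, hUdef, Set.disjoint_left]
    intro ω h1 h2
    simp only [Set.mem_preimage, Set.mem_singleton_iff] at h1 h2
    exact hij (by exact_mod_cast h1.symm.trans h2)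
  have hPU : ∀ k : ℕ, P (U k)
      = ENNReal.ofReal (Real.exp (-(t - s)) * (t - s) ^ k / (Nat.factorial k)) := by
    intro k
    have := hdist s t hs hst k
    convert this using 2
    rfl
  have hUnion : P (⋃ k, U k) = 1 := by
    rw [measure_iUnion hdisj hU]
    have : ∀ k : ℕ, P (U k) = ENNReal.ofReal
        (Real.exp ((0:ℝ) * k) * (Real.exp (-(t-s)) * (t - s) ^ k / (Nat.factorial k))) := by
      intro k; rw [hPU k]; norm_num
    rw [tsum_congr this, poisson_sum _ _ hm]
    simp
  have hcompl : P ((⋃ k, U k)ᶜ) = 0 := by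
    rw [measure_compl (MeasurableSet.iUnion hU) (measure_ne_top _ _), hUnion, measure_univ]
    simp
  have haeU : (Set.univ : Set Ω) =ᵐ[P] (⋃ k, U k) := by
    rw [Filter.eventuallyEq_set]
    filter_upwards [measure_eq_zero_iff_ae_notMem.mp hcompl] with ω hω
    simp only [mem_univ, true_iff]
    by_contra h; exact hω h
  have key : ∫⁻ ω, ENNReal.ofReal (Real.exp (c * (D ω : ℝ))) ∂P
      = ENNReal.ofReal (Real.exp ((t - s) * (Real.exp c - 1))) := by
    calc ∫⁻ ω, ENNReal.ofReal (Real.exp (c * (D ω : ℝ))) ∂P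
        = ∫⁻ ω in Set.univ, ENNReal.ofReal (Real.exp (c * (D ω : ℝ))) ∂P := by
          rw [Measure.restrict_univ]
      _ = ∫⁻ ω in ⋃ k, U k, ENNReal.ofReal (Real.exp (c * (D ω : ℝ))) ∂P :=
          setLIntegral_congr haeU
      _ = ∑' k : ℕ, ∫⁻ ω in U k, ENNReal.ofReal (Real.exp (c * (D ω : ℝ))) ∂P :=
          lintegral_iUnion hU hdisj _
      _ = ∑' k : ℕ, ENNReal.ofReal (Real.exp (c * k)) * P (U k) := by
          refine tsum_congr fun k => ?_
          rw [setLIntegral_congr_fun (hU k) (fun ω hω => ?_), setLIntegral_const]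
          have : D ω = (k : ℤ) := hω
          rw [this]
          norm_num
      _ = ∑' k : ℕ, ENNReal.ofReal
            (Real.exp (c * k) * (Real.exp (-(t-s)) * (t - s) ^ k / (Nat.factorial k))) := by
          refine tsum_congr fun k => ?_
          rw [hPU k, ← ENNReal.ofReal_mul (Real.exp_nonneg _)]
      _ = ENNReal.ofReal (Real.exp ((t - s) * (Real.exp c - 1))) := poisson_sum _ _ hm
  have hmeasf : Measurable (fun ω => Real.exp (c * (D ω : ℝ))) := by
    exact Real.measurable_exp.comp ((measurable_const.mul
      ((measurable_from_top : Measurable (fun z : ℤ => (z : ℝ))).comp hD)))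
  have hint : Integrable (fun ω => Real.exp (c * (D ω : ℝ))) P := by
    refine ⟨hmeasf.aestronglyMeasurable, ?_⟩
    rw [hasFiniteIntegral_iff_ofReal (ae_of_all _ fun ω => Real.exp_nonneg _)]
    rw [key]
    exact ENNReal.ofReal_lt_top
  refine ⟨hint, ?_⟩
  rw [integral_eq_lintegral_of_nonneg_ae (ae_of_all _ fun ω => Real.exp_nonneg _)
    hmeasf.aestronglyMeasurable, key, ENNReal.toReal_ofReal (Real.exp_nonneg _)]


lemma chernoff_finite {Ω : Type*} [MeasurableSpace Ω] (P : Measure Ω) [IsProbabilityMeasure P]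
    (N : ℝ → Ω → ℕ)
    (hmeas : ∀ t : ℝ, Measurable (N t))
    (h0 : ∀ᵐ ω ∂P, N 0 ω = 0)
    (hindep : ∀ s t : ℝ, 0 ≤ s → s ≤ t →
      Indep (⨆ r ∈ Icc (0 : ℝ) s, MeasurableSpace.comap (N r) ⊤)
        (MeasurableSpace.comap (fun ω => (N t ω : ℤ) - (N s ω : ℤ)) ⊤) P)
    (hdist : ∀ s t : ℝ, 0 ≤ s → s ≤ t → ∀ k : ℕ,
      P {ω | (N t ω : ℤ) - (N s ω : ℤ) = (k : ℤ)}
        = ENNReal.ofReal (Real.exp (-(t - s)) * (t - s) ^ k / (Nat.factorial k)))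
    (S A' l e : ℝ) (hS : 0 < S) (hA' : 0 < A') (hl : 0 < l) (he : e = 1 ∨ e = -1)
    (F : Finset ℝ) (hF : ∀ q ∈ F, q ∈ Icc (0 : ℝ) S) :
    P {ω | ∃ q ∈ F, A' ≤ e * ((N q ω : ℝ) - q)}
      ≤ ENNReal.ofReal (Real.exp (S * (Real.exp (e * l) - 1 - e * l) - l * A')) := by
  have he2 : e * e = 1 := by rcases he with h | h <;> rw [h] <;> norm_num
  set c : ℝ := e * l with hc
  -- basic objects
  set g : ℝ → Set Ω := fun q => {ω | A' ≤ e * ((N q ω : ℝ) - q)} with hg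
  set Z : ℝ → Ω → ℝ := fun q ω => Real.exp (c * ((N q ω : ℝ) - q)) with hZ
  set B : ℝ → Set Ω := fun q => g q \ ⋃ r ∈ F.filter (fun r => r < q), g r with hB
  set D : ℝ → Ω → ℤ := fun q ω => (N S ω : ℤ) - (N q ω : ℤ) with hD
  set W : ℝ → Ω → ℝ := fun q ω => Real.exp (c * ((D q ω : ℝ) - (S - q))) with hW
  set κ : ℝ := Real.exp (l * A') with hκ
  have hκpos : 0 < κ := Real.exp_pos _
  -- ambient measurability
  have hgmeas : ∀ q, MeasurableSet (g q) := by
    intro q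
    have : Measurable fun ω => e * ((N q ω : ℝ) - q) :=
      measurable_const.mul (((measurable_from_top (f := fun n : ℕ => (n : ℝ))).comp
        (hmeas q)).sub measurable_const)
    exact measurableSet_le measurable_const this
  have hBmeas : ∀ q, MeasurableSet (B q) := by
    intro q
    exact (hgmeas q).diff (Finset.measurableSet_biUnion _ fun r _ => hgmeas r)
  -- B's are pairwise disjoint on F and cover the union of g's
  have hdisj : (↑F : Set ℝ).PairwiseDisjoint B := by
    intro q hq r hr hqr
    rcases lt_or_gt_of_ne hqr with h | h
    · refine Set.disjoint_left.mpr fun ω hω hω' => ?_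
      have : ω ∉ ⋃ r' ∈ F.filter (fun r' => r' < r), g r' := hω'.2
      exact this (Set.mem_biUnion (Finset.mem_coe.mpr (Finset.mem_filter.mpr ⟨Finset.mem_coe.mp hq, h⟩)) hω.1)
    · refine Set.disjoint_left.mpr fun ω hω hω' => ?_
      have : ω ∉ ⋃ r' ∈ F.filter (fun r' => r' < q), g r' := hω.2
      exact this (Set.mem_biUnion (Finset.mem_coe.mpr (Finset.mem_filter.mpr ⟨Finset.mem_coe.mp hr, h⟩)) hω'.1)
  have hcover : {ω | ∃ q ∈ F, A' ≤ e * ((N q ω : ℝ) - q)} = ⋃ q ∈ F, B q := by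
    ext ω
    simp only [Set.mem_setOf_eq, Set.mem_iUnion]
    constructor
    · rintro ⟨q0, hq0, hA0⟩
      classical
      set F' := F.filter (fun q => ω ∈ g q) with hF'
      have hne : F'.Nonempty := ⟨q0, by simp [hF', Finset.mem_filter, hq0, hg, hA0]⟩
      refine ⟨F'.min' hne, ?_, ?_⟩
      · exact Finset.mem_of_mem_filter _ (F'.min'_mem hne)
      · constructor
        · have := F'.min'_mem hne
          simp only [hF', Finset.mem_filter] at this
          exact this.2
        · intro hmem
          simp only [Set.mem_iUnion, Finset.mem_filter] at hmem
          obtain ⟨r, ⟨⟨hrF, hrlt⟩, hωr⟩⟩ := hmem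
          have : F'.min' hne ≤ r := Finset.min'_le _ _ (by simp [hF', Finset.mem_filter, hrF, hωr])
          exact absurd hrlt (not_lt.mpr this)
    · rintro ⟨q, hq, hωB⟩
      exact ⟨q, hq, hωB.1⟩
  -- integrability and expectation facts
  have hZint : ∀ q : ℝ, 0 ≤ q → Integrable (Z q) P ∧ ∫ ω, Z q ω ∂P
      = Real.exp (q * (Real.exp c - 1 - c)) := by
    intro q hq0
    obtain ⟨hint, hval⟩ := mgf_incr P N hmeas hdist 0 q le_rfl hq0 c
    have hae : (fun ω => Real.exp (c * ((((N q ω : ℤ) - (N 0 ω : ℤ) : ℤ)) : ℝ))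
        * Real.exp (-(c * q))) =ᵐ[P] Z q := by
      filter_upwards [h0] with ω hω
      simp only [hZ, hω]
      rw [← Real.exp_add]
      congr 1
      push_cast
      ring
    constructor
    · exact (hint.mul_const _).congr hae
    · rw [← integral_congr_ae hae, integral_mul_const, hval, ← Real.exp_add]
      congr 1
      ring
  have hWfact : ∀ q : ℝ, 0 ≤ q → q ≤ S → Integrable (W q) P ∧ ∫ ω, W q ω ∂P
      = Real.exp ((S - q) * (Real.exp c - 1 - c)) := by
    intro q hq0 hqS
    obtain ⟨hint, hval⟩ := mgf_incr P N hmeas hdist q S hq0 hqS c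
    have heq : (fun ω => Real.exp (c * ((((N S ω : ℤ) - (N q ω : ℤ) : ℤ)) : ℝ))
        * Real.exp (-(c * (S - q)))) = W q := by
      funext ω
      simp only [hW, hD]
      rw [← Real.exp_add]
      congr 1
      push_cast
      ring
    constructor
    · rw [← heq]; exact hint.mul_const _
    · rw [← heq, integral_mul_const, hval, ← Real.exp_add]
      congr 1
      ring
  have hWone : ∀ q : ℝ, 0 ≤ q → q ≤ S → 1 ≤ ∫ ω, W q ω ∂P := by
    intro q hq0 hqS
    rw [(hWfact q hq0 hqS).2]
    have h1 : 0 ≤ Real.exp c - 1 - c := by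
      have := Real.add_one_le_exp c
      linarith
    have h2 : 0 ≤ S - q := by linarith
    exact Real.one_le_exp (mul_nonneg h2 h1)
  -- independence
  have hindepF : ∀ q : ℝ, 0 ≤ q → q ≤ S →
      IndepFun ((B q).indicator (Z q)) (W q) P := by
    intro q hq0 hqS
    have hgq : ∀ r : ℝ, r ∈ Icc (0:ℝ) q → MeasurableSet[⨆ r' ∈ Icc (0 : ℝ) q,
        MeasurableSpace.comap (N r') ⊤] (g r) := by
      intro r hr
      have h1 : MeasurableSet[MeasurableSpace.comap (N r) ⊤] (g r) :=
        ⟨{n : ℕ | A' ≤ e * ((n : ℝ) - r)}, trivial, rfl⟩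
      exact (le_iSup₂ (f := fun r' (_ : r' ∈ Icc (0:ℝ) q) => MeasurableSpace.comap (N r') ⊤)
        r hr) _ h1
    have hBq : MeasurableSet[⨆ r' ∈ Icc (0 : ℝ) q,
        MeasurableSpace.comap (N r') ⊤] (B q) := by
      refine MeasurableSet.diff (hgq q ⟨hq0, le_rfl⟩) ?_
      refine Finset.measurableSet_biUnion _ fun r hr => ?_
      rw [Finset.mem_filter] at hr
      exact hgq r ⟨(hF r hr.1).1, le_of_lt hr.2⟩
    have hNqm : Measurable[⨆ r' ∈ Icc (0 : ℝ) q, MeasurableSpace.comap (N r') ⊤] (N q) := by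
      apply measurable_iff_comap_le.mpr
      exact le_trans (MeasurableSpace.comap_mono le_top)
        (le_iSup₂ (f := fun r' (_ : r' ∈ Icc (0:ℝ) q) => MeasurableSpace.comap (N r') ⊤)
          q ⟨hq0, le_rfl⟩)
    have hZqm : Measurable[⨆ r' ∈ Icc (0 : ℝ) q, MeasurableSpace.comap (N r') ⊤] (Z q) :=
      (measurable_from_top (f := fun n : ℕ => Real.exp (c * ((n : ℝ) - q)))).comp hNqm
    have hfm : Measurable[⨆ r' ∈ Icc (0 : ℝ) q, MeasurableSpace.comap (N r') ⊤]
        ((B q).indicator (Z q)) := hZqm.indicator hBq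
    have hWm : Measurable[MeasurableSpace.comap (fun ω => (N S ω : ℤ) - (N q ω : ℤ)) ⊤]
        (W q) := by
      have hDm : Measurable[MeasurableSpace.comap (fun ω => (N S ω : ℤ) - (N q ω : ℤ)) ⊤]
          (fun ω => (N S ω : ℤ) - (N q ω : ℤ)) :=
        measurable_iff_comap_le.mpr (MeasurableSpace.comap_mono le_top)
      exact (measurable_from_top (f := fun z : ℤ => Real.exp (c * ((z : ℝ) - (S - q))))).comp hDm
    have h := hindep q S hq0 hqS
    exact ProbabilityTheory.Kernel.indep_of_indep_of_le_left
      (ProbabilityTheory.Kernel.indep_of_indep_of_le_right h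
        (measurable_iff_comap_le.mp hWm))
      (measurable_iff_comap_le.mp hfm)
  -- per-q estimate
  have hperq : ∀ q ∈ F, κ * (P (B q)).toReal ≤ ∫ ω, (B q).indicator (Z S) ω ∂P := by
    intro q hqF
    obtain ⟨hq0, hqS⟩ := hF q hqF
    have hZqint := (hZint q hq0).1
    have hfint : Integrable ((B q).indicator (Z q)) P := hZqint.indicator (hBmeas q)
    have hWint := (hWfact q hq0 hqS).1
    have step1 : κ * (P (B q)).toReal ≤ ∫ ω, (B q).indicator (Z q) ω ∂P := by
      have : κ * (P (B q)).toReal = ∫ ω, (B q).indicator (fun _ => κ) ω ∂P := by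
        rw [integral_indicator_const κ (hBmeas q), smul_eq_mul, mul_comm]
        rfl
      rw [this]
      refine integral_mono ((integrable_const κ).indicator (hBmeas q)) hfint fun ω => ?_
      by_cases hω : ω ∈ B q
      · rw [Set.indicator_of_mem hω, Set.indicator_of_mem hω, hκ, hZ]
        apply Real.exp_le_exp.mpr
        have hg' : A' ≤ e * ((N q ω : ℝ) - q) := hω.1
        calc l * A' ≤ l * (e * ((N q ω : ℝ) - q)) := by
              exact mul_le_mul_of_nonneg_left hg' (le_of_lt hl)
          _ = c * ((N q ω : ℝ) - q) := by rw [hc]; ring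
      · rw [Set.indicator_of_notMem hω, Set.indicator_of_notMem hω]
    have step2 : ∫ ω, (B q).indicator (Z q) ω ∂P ≤ ∫ ω, (B q).indicator (Z S) ω ∂P := by
      have hnn : 0 ≤ ∫ ω, (B q).indicator (Z q) ω ∂P := by
        apply integral_nonneg
        intro ω
        exact Set.indicator_nonneg (fun ω' _ => le_of_lt (Real.exp_pos _)) ω
      have hmul : (B q).indicator (Z q) * W q = (B q).indicator (Z S) := by
        funext ω
        simp only [Pi.mul_apply]
        by_cases hω : ω ∈ B q
        · rw [Set.indicator_of_mem hω, Set.indicator_of_mem hω]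
          simp only [hZ, hW, hD]
          rw [← Real.exp_add]
          congr 1
          push_cast
          ring
        · rw [Set.indicator_of_notMem hω, Set.indicator_of_notMem hω, zero_mul]
      calc ∫ ω, (B q).indicator (Z q) ω ∂P
          ≤ (∫ ω, (B q).indicator (Z q) ω ∂P) * ∫ ω, W q ω ∂P :=
            le_mul_of_one_le_right hnn (hWone q hq0 hqS)
        _ = ∫ ω, ((B q).indicator (Z q) * W q) ω ∂P :=
            ((hindepF q hq0 hqS).integral_mul_eq_mul_integral hfint.aestronglyMeasurable hWint.aestronglyMeasurable).symm
        _ = ∫ ω, (B q).indicator (Z S) ω ∂P := by rw [hmul]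
    exact step1.trans step2
  -- sum over q
  have hZSint := (hZint S (le_of_lt hS)).1
  have hZSval := (hZint S (le_of_lt hS)).2
  have hsum : κ * (P (⋃ q ∈ F, B q)).toReal ≤ Real.exp (S * (Real.exp c - 1 - c)) := by
    have hPE : P (⋃ q ∈ F, B q) = ∑ q ∈ F, P (B q) :=
      measure_biUnion_finset hdisj fun q _ => hBmeas q
    have htoReal : (P (⋃ q ∈ F, B q)).toReal = ∑ q ∈ F, (P (B q)).toReal := by
      rw [hPE, ENNReal.toReal_sum fun q _ => measure_ne_top P _]
    calc κ * (P (⋃ q ∈ F, B q)).toReal = ∑ q ∈ F, κ * (P (B q)).toReal := by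
          rw [htoReal, Finset.mul_sum]
      _ ≤ ∑ q ∈ F, ∫ ω, (B q).indicator (Z S) ω ∂P := Finset.sum_le_sum hperq
      _ = ∑ q ∈ F, ∫ ω in B q, Z S ω ∂P := by
          refine Finset.sum_congr rfl fun q _ => ?_
          rw [integral_indicator (hBmeas q)]
      _ = ∫ ω in ⋃ q ∈ F, B q, Z S ω ∂P := by
          rw [integral_biUnion_finset F (fun q _ => hBmeas q) hdisj
            (fun q _ => hZSint.integrableOn)]
      _ ≤ ∫ ω, Z S ω ∂P :=
          setIntegral_le_integral hZSint (ae_of_all _ fun ω => le_of_lt (Real.exp_pos _))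
      _ = Real.exp (S * (Real.exp c - 1 - c)) := hZSval
  -- conclude
  rw [hcover]
  have hne : P (⋃ q ∈ F, B q) ≠ ⊤ := measure_ne_top P _
  rw [← ENNReal.ofReal_toReal hne]
  apply ENNReal.ofReal_le_ofReal
  have : (P (⋃ q ∈ F, B q)).toReal ≤ Real.exp (S * (Real.exp c - 1 - c)) / κ := by
    rw [le_div_iff₀ hκpos]
    calc (P (⋃ q ∈ F, B q)).toReal * κ = κ * (P (⋃ q ∈ F, B q)).toReal := mul_comm _ _
      _ ≤ _ := hsum
  calc (P (⋃ q ∈ F, B q)).toReal ≤ Real.exp (S * (Real.exp c - 1 - c)) / κ := this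
    _ = Real.exp (S * (Real.exp c - 1 - c) - l * A') := by rw [hκ, ← Real.exp_sub]


lemma exp_num_ineq (S A' e : ℝ) (hS : 0 < S) (hA' : 0 < A') (hle : A' ≤ 2 * S)
    (he : e = 1 ∨ e = -1) :
    S * (Real.exp (e * (A' / (2 * S))) - 1 - e * (A' / (2 * S))) - (A' / (2 * S)) * A'
      ≤ -(A' ^ 2) / (4 * S) := by
  have he2 : e * e = 1 := by rcases he with h | h <;> rw [h] <;> norm_num
  have habs : |e| = 1 := by rcases he with h | h <;> rw [h] <;> norm_num
  set l : ℝ := A' / (2 * S) with hl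
  have hlpos : 0 < l := by positivity
  have hl1 : l ≤ 1 := by
    rw [hl, div_le_one (by positivity)]
    linarith
  have hx : |e * l| ≤ 1 := by
    rw [abs_mul, habs, one_mul, abs_of_pos hlpos]
    exact hl1
  have hb := Real.exp_bound hx (n := 2) (by norm_num)
  have hsum : ∑ m ∈ Finset.range 2, (e * l) ^ m / (Nat.factorial m) = 1 + e * l := by
    simp [Finset.sum_range_succ]
  rw [hsum] at hb
  have habs2 : |e * l| ^ 2 = l ^ 2 := by
    rw [abs_mul, habs, one_mul, abs_of_pos hlpos]
  rw [habs2] at hb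
  have hkey : Real.exp (e * l) - 1 - e * l ≤ l ^ 2 := by
    have h1 := (abs_sub_le_iff.mp hb).1
    have h2 : ((Nat.succ 2 : ℕ) : ℝ) / ((Nat.factorial 2 : ℕ) * (2:ℕ)) ≤ 1 := by
      norm_num [Nat.factorial]
    nlinarith [sq_nonneg l]
  have hSl : S * l ^ 2 = A' ^ 2 / (4 * S) := by
    rw [hl]; field_simp; ring
  have hlA : l * A' = A' ^ 2 / (2 * S) := by
    rw [hl]; field_simp
  have hmono : S * (Real.exp (e * l) - 1 - e * l) ≤ S * l ^ 2 :=
    mul_le_mul_of_nonneg_left hkey hS.le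
  rw [hSl] at hmono
  have h4 : A' ^ 2 / (2 * S) = 2 * (A' ^ 2 / (4 * S)) := by
    field_simp; ring
  have h5 : -A' ^ 2 / (4 * S) = -(A' ^ 2 / (4 * S)) := by ring
  linarith [hlA, hmono, h4, h5]


/-- (Chernoff bound for the compensated Poisson process.)
If `N` is a standard Poisson process (ℕ-valued, right-continuous paths, `N(0) = 0` a.s.,
with increments `N(t) − N(s)` independent of the past and Poisson of mean `t − s`),
then for all `S > 0` and `0 < A ≤ 2 log(2) S`,
`ℙ(sup_{0≤s≤S} |N(s) − s| ≥ A) ≤ 2 exp(−A²/(4S))`. -/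
theorem stmt11
    {Ω : Type*} [MeasurableSpace Ω] (P : Measure Ω) [IsProbabilityMeasure P]
    (N : ℝ → Ω → ℕ)
    (hmeas : ∀ t : ℝ, Measurable (N t))
    (hrc : ∀ ω, ∀ t ≥ (0 : ℝ), ContinuousWithinAt (fun u => N u ω) (Ici t) t)
    (h0 : ∀ᵐ ω ∂P, N 0 ω = 0)
    (hindep : ∀ s t : ℝ, 0 ≤ s → s ≤ t →
      Indep (⨆ r ∈ Icc (0 : ℝ) s, MeasurableSpace.comap (N r) ⊤)
        (MeasurableSpace.comap (fun ω => (N t ω : ℤ) - (N s ω : ℤ)) ⊤) P)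
    (hdist : ∀ s t : ℝ, 0 ≤ s → s ≤ t → ∀ k : ℕ,
      P {ω | (N t ω : ℤ) - (N s ω : ℤ) = (k : ℤ)}
        = ENNReal.ofReal (Real.exp (-(t - s)) * (t - s) ^ k / (Nat.factorial k))) :
    ∀ S A : ℝ, 0 < S → 0 < A → A ≤ 2 * Real.log 2 * S →
      P {ω | ENNReal.ofReal A ≤
          ⨆ s ∈ Icc (0 : ℝ) S, ENNReal.ofReal |(N s ω : ℝ) - s|}
        ≤ ENNReal.ofReal (2 * Real.exp (-(A ^ 2) / (4 * S))) := by
  intro S A hS hA hAlog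
  classical
  have hlog2 : Real.log 2 ≤ 1 := by
    have := Real.log_le_sub_one_of_pos (x := 2) (by norm_num)
    linarith
  have hA2S : A ≤ 2 * S := by nlinarith [hS.le, hA.le]
  -- countable time grid
  obtain ⟨f, hf⟩ := exists_surjective_nat ℚ
  set u : ℕ → ℝ := fun n => Nat.casesOn n S
    (fun k => if ((f k : ℝ)) ∈ Icc (0:ℝ) S then ((f k : ℝ)) else S) with hu
  have hu0 : u 0 = S := rfl
  have humem : ∀ n, u n ∈ Icc (0:ℝ) S := by
    intro n
    cases n with
    | zero => exact ⟨hS.le, le_rfl⟩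
    | succ k =>
      have hk : u (k + 1) = if ((f k : ℝ)) ∈ Icc (0:ℝ) S then ((f k : ℝ)) else S := rfl
      rw [hk]
      split_ifs with h
      · exact h
      · exact ⟨hS.le, le_rfl⟩
  have hurat : ∀ q : ℚ, ((q:ℝ)) ∈ Icc (0:ℝ) S → ∃ n, u n = (q:ℝ) := by
    intro q hq
    obtain ⟨k, hk⟩ := hf q
    have hk2 : u (k + 1) = if ((f k : ℝ)) ∈ Icc (0:ℝ) S then ((f k : ℝ)) else S := rfl
    refine ⟨k + 1, ?_⟩
    rw [hk2, hk, if_pos hq]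
  -- sup reduction to the countable grid
  have hsup : ∀ ω, (⨆ s ∈ Icc (0:ℝ) S, ENNReal.ofReal |(N s ω : ℝ) - s|)
      ≤ ⨆ n, ENNReal.ofReal |(N (u n) ω : ℝ) - u n| := by
    intro ω
    refine iSup₂_le fun s hs => ?_
    rcases eq_or_lt_of_le hs.2 with hsS | hsS
    · have : ENNReal.ofReal |(N s ω : ℝ) - s|
          = ENNReal.ofReal |(N (u 0) ω : ℝ) - u 0| := by rw [hu0, hsS]
      rw [this]
      exact le_iSup (fun n => ENNReal.ofReal |(N (u n) ω : ℝ) - u n|) 0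
    · have hs0 : 0 ≤ s := hs.1
      have hev : ∀ᶠ x in nhdsWithin s (Ici s), N x ω = N s ω := by
        have hcw := (hrc ω s hs0).tendsto
        rw [nhds_discrete] at hcw
        exact Filter.tendsto_pure.mp hcw
      rw [eventually_nhdsWithin_iff, Metric.eventually_nhds_iff] at hev
      obtain ⟨ε, hε, hball⟩ := hev
      refine ENNReal.le_of_forall_pos_le_add fun δ hδ _ => ?_
      set δ' : ℝ := min (min (ε / 2) ((S - s) / 2)) (δ : ℝ) with hδ'
      have hδ'pos : 0 < δ' := by
        refine lt_min (lt_min (by linarith) (by linarith)) ?_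
        exact_mod_cast hδ
      obtain ⟨q, hq1, hq2⟩ := exists_rat_btwn (lt_add_of_pos_right s hδ'pos)
      have hqS : (q:ℝ) < S := by
        have : δ' ≤ (S - s) / 2 := (min_le_left _ _).trans (min_le_right _ _)
        linarith
      have hqI : ((q:ℝ)) ∈ Icc (0:ℝ) S := ⟨le_of_lt (lt_of_le_of_lt hs0 hq1), hqS.le⟩
      obtain ⟨n, hn⟩ := hurat q hqI
      have hNq : N ((q:ℝ)) ω = N s ω := by
        refine hball ?_ (le_of_lt hq1)
        rw [Real.dist_eq, abs_of_pos (by linarith : (0:ℝ) < (q:ℝ) - s)]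
        have : δ' ≤ ε / 2 := (min_le_left _ _).trans (min_le_left _ _)
        linarith
      have hkey : |(N s ω : ℝ) - s| ≤ |(N (u n) ω : ℝ) - u n| + δ' := by
        rw [hn, hNq]
        have h1 : |(N s ω : ℝ) - s| ≤ |(N s ω : ℝ) - (q:ℝ)| + |(q:ℝ) - s| := by
          have := abs_sub_le ((N s ω : ℝ)) ((q:ℝ)) s
          linarith [this]
        have h2 : |(q:ℝ) - s| ≤ δ' := by
          rw [abs_of_pos (by linarith : (0:ℝ) < (q:ℝ) - s)]
          linarith
        linarith
      calc ENNReal.ofReal |(N s ω : ℝ) - s|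
          ≤ ENNReal.ofReal (|(N (u n) ω : ℝ) - u n| + δ') := ENNReal.ofReal_le_ofReal hkey
        _ ≤ ENNReal.ofReal |(N (u n) ω : ℝ) - u n| + ENNReal.ofReal δ' :=
            ENNReal.ofReal_add_le
        _ ≤ (⨆ n, ENNReal.ofReal |(N (u n) ω : ℝ) - u n|) + (δ : ENNReal) := by
            refine add_le_add (le_iSup (fun n => ENNReal.ofReal |(N (u n) ω : ℝ) - u n|) n) ?_
            calc ENNReal.ofReal δ' ≤ ENNReal.ofReal ((δ : ℝ)) :=
                  ENNReal.ofReal_le_ofReal (min_le_right _ _)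
              _ = (δ : ENNReal) := ENNReal.ofReal_coe_nnreal
  -- bound for a fixed sub-level A'
  have hbound : ∀ A' : ℝ, 0 < A' → A' < A →
      P {ω | ENNReal.ofReal A ≤
          ⨆ s ∈ Icc (0 : ℝ) S, ENNReal.ofReal |(N s ω : ℝ) - s|}
        ≤ ENNReal.ofReal (2 * Real.exp (-(A' ^ 2) / (4 * S))) := by
    intro A' hA'pos hA'lt
    set H : ℕ → Set Ω := fun n => {ω | A' ≤ |(N (u n) ω : ℝ) - u n|} with hH
    have hsub : {ω | ENNReal.ofReal A ≤
        ⨆ s ∈ Icc (0 : ℝ) S, ENNReal.ofReal |(N s ω : ℝ) - s|} ⊆ ⋃ n, H n := by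
      intro ω hω
      have h1 : ENNReal.ofReal A ≤ ⨆ n, ENNReal.ofReal |(N (u n) ω : ℝ) - u n| :=
        le_trans hω (hsup ω)
      have hlt : ENNReal.ofReal A' < ⨆ n, ENNReal.ofReal |(N (u n) ω : ℝ) - u n| :=
        lt_of_lt_of_le ((ENNReal.ofReal_lt_ofReal_iff hA).mpr hA'lt) h1
      obtain ⟨n, hn⟩ := lt_iSup_iff.mp hlt
      refine Set.mem_iUnion.mpr ⟨n, ?_⟩
      by_contra hcon
      have : |(N (u n) ω : ℝ) - u n| ≤ A' := le_of_not_ge hcon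
      exact absurd (ENNReal.ofReal_le_ofReal this) (not_le.mpr hn)
    have hA'2S : A' ≤ 2 * S := by linarith
    have hfin : ∀ j : ℕ, P (Set.accumulate H j)
        ≤ ENNReal.ofReal (2 * Real.exp (-(A' ^ 2) / (4 * S))) := by
      intro j
      set F : Finset ℝ := (Finset.range (j+1)).image u with hFdef
      have hFmem : ∀ q ∈ F, q ∈ Icc (0:ℝ) S := by
        intro q hq
        obtain ⟨n, _, rfl⟩ := Finset.mem_image.mp hq
        exact humem n
      have hsplit : Set.accumulate H j ⊆
          {ω | ∃ q ∈ F, A' ≤ (1:ℝ) * ((N q ω : ℝ) - q)}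
          ∪ {ω | ∃ q ∈ F, A' ≤ (-1:ℝ) * ((N q ω : ℝ) - q)} := by
        intro ω hω
        simp only [Set.accumulate_def, Set.mem_iUnion] at hω
        obtain ⟨n, hnj, hn⟩ := hω
        have hqF : u n ∈ F :=
          Finset.mem_image.mpr ⟨n, Finset.mem_range.mpr (by omega), rfl⟩
        have hn' : A' ≤ |(N (u n) ω : ℝ) - u n| := hn
        rcases le_abs.mp hn' with h | h
        · exact Or.inl ⟨u n, hqF, by linarith [h]⟩
        · exact Or.inr ⟨u n, hqF, by linarith [h]⟩
      have hone : ∀ e : ℝ, e = 1 ∨ e = -1 →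
          P {ω | ∃ q ∈ F, A' ≤ e * ((N q ω : ℝ) - q)}
            ≤ ENNReal.ofReal (Real.exp (-(A' ^ 2) / (4 * S))) := by
        intro e he
        have hch := chernoff_finite P N hmeas h0 hindep hdist S A' (A' / (2*S)) e hS hA'pos
          (by positivity) he F hFmem
        refine le_trans hch (ENNReal.ofReal_le_ofReal ?_)
        exact Real.exp_le_exp.mpr (exp_num_ineq S A' e hS hA'pos hA'2S he)
      calc P (Set.accumulate H j)
          ≤ P ({ω | ∃ q ∈ F, A' ≤ (1:ℝ) * ((N q ω : ℝ) - q)}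
            ∪ {ω | ∃ q ∈ F, A' ≤ (-1:ℝ) * ((N q ω : ℝ) - q)}) := measure_mono hsplit
        _ ≤ P {ω | ∃ q ∈ F, A' ≤ (1:ℝ) * ((N q ω : ℝ) - q)}
            + P {ω | ∃ q ∈ F, A' ≤ (-1:ℝ) * ((N q ω : ℝ) - q)} := measure_union_le _ _
        _ ≤ ENNReal.ofReal (Real.exp (-(A' ^ 2) / (4 * S)))
            + ENNReal.ofReal (Real.exp (-(A' ^ 2) / (4 * S))) :=
            add_le_add (hone 1 (Or.inl rfl)) (hone (-1) (Or.inr rfl))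
        _ = ENNReal.ofReal (2 * Real.exp (-(A' ^ 2) / (4 * S))) := by
            rw [← ENNReal.ofReal_add (Real.exp_nonneg _) (Real.exp_nonneg _)]
            congr 1
            ring
    calc P {ω | ENNReal.ofReal A ≤
          ⨆ s ∈ Icc (0 : ℝ) S, ENNReal.ofReal |(N s ω : ℝ) - s|}
        ≤ P (⋃ n, H n) := measure_mono hsub
      _ = ⨆ j, P (Set.accumulate H j) := measure_iUnion_eq_iSup_accumulate
      _ ≤ ENNReal.ofReal (2 * Real.exp (-(A' ^ 2) / (4 * S))) := iSup_le hfin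
  -- pass to the limit A' → A
  have h1 : Filter.Tendsto (fun m : ℕ => A - 1/((m:ℝ)+1)) Filter.atTop (nhds A) := by
    have h2 := tendsto_one_div_add_atTop_nhds_zero_nat (𝕜 := ℝ)
    have h3 := (tendsto_const_nhds (x := A) (f := Filter.atTop (α := ℕ))).sub h2
    simpa using h3
  have hcont : Continuous fun x : ℝ => ENNReal.ofReal (2 * Real.exp (-(x ^ 2) / (4 * S))) := by
    apply ENNReal.continuous_ofReal.comp
    exact continuous_const.mul
      (Real.continuous_exp.comp (((continuous_pow 2).neg).div_const (4 * S)))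
  have htend : Filter.Tendsto (fun m : ℕ => ENNReal.ofReal
      (2 * Real.exp (-((A - 1/((m:ℝ)+1)) ^ 2) / (4 * S)))) Filter.atTop
      (nhds (ENNReal.ofReal (2 * Real.exp (-(A ^ 2) / (4 * S))))) :=
    (hcont.tendsto A).comp h1
  refine ge_of_tendsto htend ?_
  have hev : ∀ᶠ m : ℕ in Filter.atTop, 1/((m:ℝ)+1) < A := by
    have h2 := tendsto_one_div_add_atTop_nhds_zero_nat (𝕜 := ℝ)
    exact h2.eventually_lt_const hA
  filter_upwards [hev] with m hm
  have hp : 0 < 1/((m:ℝ)+1) := by positivity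
  exact hbound (A - 1/((m:ℝ)+1)) (by linarith) (by linarith)
end

section
/- Let B = (B(t))_{t≥0} be a standard real Brownian motion: B has continuous sample paths, B(0) = 0 almost surely, and for all 0 ≤ s ≤ t the increment B(t) − B(s) is independent of (B(r))_{r ≤ s} and is Gaussian with mean 0 and variance t − s. Then for all S, T, A > 0: ℙ( sup{ |B(t) − B(s)| : 0 ≤ s, t ≤ T, |t − s| ≤ S } ≥ A ) ≤ 2·⌈T/S⌉·exp(−A²/(18S)). -/
open Set MeasureTheory ProbabilityTheory Real
open scoped NNReal ENNReal

lemma gauss_exp (v : ℝ≥0) (c : ℝ) :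
    Integrable (fun x => Real.exp (c * x)) (gaussianReal 0 v) ∧
    ∫ x, Real.exp (c * x) ∂(gaussianReal 0 v) = Real.exp ((v : ℝ) * c ^ 2 / 2) := by
  rcases eq_or_ne v 0 with hv | hv
  · subst hv
    rw [gaussianReal_zero_var]
    constructor
    · refine ⟨(Real.measurable_exp.comp (measurable_id.const_mul c)).aestronglyMeasurable, ?_⟩
      rw [HasFiniteIntegral, lintegral_dirac]
      exact ENNReal.coe_lt_top
    · rw [integral_dirac]
      norm_num
  · have hv' : (v : ℝ) ≠ 0 := by exact_mod_cast hv
    have hv0 : (0 : ℝ) < v := lt_of_le_of_ne v.coe_nonneg (Ne.symm hv')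
    have key : ∀ x : ℝ, (Real.toNNReal (gaussianPDFReal 0 v x) : ℝ) * Real.exp (c * x)
        = Real.exp ((v : ℝ) * c ^ 2 / 2) * gaussianPDFReal ((v : ℝ) * c) v x := by
      intro x
      rw [Real.coe_toNNReal _ (gaussianPDFReal_nonneg 0 v x)]
      simp only [gaussianPDFReal, sub_zero]
      rw [mul_assoc, ← Real.exp_add, mul_left_comm, ← Real.exp_add]
      congr 2
      field_simp
      ring
    have hf : Measurable fun x => Real.toNNReal (gaussianPDFReal 0 v x) :=
      (measurable_gaussianPDFReal 0 v).real_toNNReal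
    have hpdf : gaussianReal 0 v
        = (volume : Measure ℝ).withDensity fun x => ((Real.toNNReal (gaussianPDFReal 0 v x) : ℝ≥0) : ℝ≥0∞) := by
      rw [gaussianReal_of_var_ne_zero 0 hv]
      rfl
    rw [hpdf]
    constructor
    · rw [integrable_withDensity_iff_integrable_smul hf]
      refine (((integrable_gaussianPDFReal ((v : ℝ) * c) v).const_mul
        (Real.exp ((v : ℝ) * c ^ 2 / 2))).congr ?_)
      exact ae_of_all _ fun x => by simp only [NNReal.smul_def]; exact (key x).symm
    · rw [integral_withDensity_eq_integral_smul hf]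
      simp only [NNReal.smul_def]
      calc ∫ x, (Real.toNNReal (gaussianPDFReal 0 v x) : ℝ) * Real.exp (c * x)
          = ∫ x, Real.exp ((v : ℝ) * c ^ 2 / 2) * gaussianPDFReal ((v : ℝ) * c) v x := by
            exact integral_congr_ae (ae_of_all _ key)
        _ = Real.exp ((v : ℝ) * c ^ 2 / 2) := by
            rw [integral_const_mul, integral_gaussianPDFReal_eq_one _ hv, mul_one]

lemma increment_exp {Ω : Type*} [MeasurableSpace Ω] (P : Measure Ω) [IsProbabilityMeasure P]
    (B : ℝ → Ω → ℝ) (hmeas : ∀ t : ℝ, Measurable (B t))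
    (hdist : ∀ s t : ℝ, 0 ≤ s → s ≤ t →
      Measure.map (fun ω => B t ω - B s ω) P = gaussianReal 0 (Real.toNNReal (t - s)))
    {s t : ℝ} (hs : 0 ≤ s) (hst : s ≤ t) (c : ℝ) :
    Integrable (fun ω => Real.exp (c * (B t ω - B s ω))) P ∧
    ∫ ω, Real.exp (c * (B t ω - B s ω)) ∂P = Real.exp ((t - s) * c ^ 2 / 2) := by
  have hX : Measurable fun ω => B t ω - B s ω := (hmeas t).sub (hmeas s)
  have hgm : Measurable fun x : ℝ => Real.exp (c * x) :=
    Real.measurable_exp.comp (measurable_id.const_mul c)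
  have hmap := hdist s t hs hst
  have hcoe : ((Real.toNNReal (t - s) : ℝ≥0) : ℝ) = t - s :=
    Real.coe_toNNReal _ (sub_nonneg.2 hst)
  constructor
  · have h1 : Integrable (fun x => Real.exp (c * x)) (Measure.map (fun ω => B t ω - B s ω) P) := by
      rw [hmap]; exact (gauss_exp _ c).1
    exact (integrable_map_measure hgm.aestronglyMeasurable hX.aemeasurable).mp h1
  · rw [← integral_map hX.aemeasurable hgm.aestronglyMeasurable, hmap, (gauss_exp _ c).2, hcoe]

lemma onesided {Ω : Type*} [inst : MeasurableSpace Ω] (P : Measure Ω) [IsProbabilityMeasure P]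
    (B : ℝ → Ω → ℝ) (hmeas : ∀ t : ℝ, Measurable (B t))
    (hindep : ∀ s t : ℝ, 0 ≤ s → s ≤ t →
      Indep (⨆ r ∈ Icc (0 : ℝ) s, MeasurableSpace.comap (B r) inferInstance)
        (MeasurableSpace.comap (fun ω => B t ω - B s ω) inferInstance) P)
    (hdist : ∀ s t : ℝ, 0 ≤ s → s ≤ t →
      Measure.map (fun ω => B t ω - B s ω) P = gaussianReal 0 (Real.toNNReal (t - s)))
    {u S b σ : ℝ} (hu : 0 ≤ u) (hS : 0 < S) (hb : 0 < b) (hσ : σ ^ 2 = 1)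
    (F : Finset ℝ) (hF : ∀ q ∈ F, q ∈ Icc u (u + S)) :
    P (⋃ q ∈ F, {ω | b ≤ σ * (B q ω - B u ω)}) ≤
      ENNReal.ofReal (Real.exp (-b ^ 2 / (2 * S))) := by
  set l : ℝ := b / S with hl
  have hl0 : 0 < l := div_pos hb hS
  set c : ℝ := σ * l with hc
  have hc2 : c ^ 2 = l ^ 2 := by rw [hc, mul_pow, hσ, one_mul]
  -- sorted enumeration of times
  set G : Finset ℝ := insert u F with hG
  have hGne : u ∈ G := Finset.mem_insert_self u F
  set n : ℕ := G.card - 1 with hn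
  have hcard : G.card = n + 1 :=
    (Nat.succ_pred_eq_of_pos (Finset.card_pos.mpr ⟨u, hGne⟩)).symm
  set e := G.orderIsoOfFin hcard with he
  set t : ℕ → ℝ := fun i => (e ⟨min i n, Nat.lt_succ_of_le (min_le_right i n)⟩ : ℝ) with ht
  have htmem : ∀ i, t i ∈ G := fun i => (e _).2
  have hGICC : ∀ q ∈ G, q ∈ Icc u (u + S) := by
    intro q hq
    rcases Finset.mem_insert.mp hq with h | h
    · exact ⟨le_of_eq h.symm, h ▸ le_add_of_nonneg_right hS.le⟩
    · exact hF q h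
  have htu : ∀ i, u ≤ t i := fun i => (hGICC _ (htmem i)).1
  have htS : ∀ i, t i ≤ u + S := fun i => (hGICC _ (htmem i)).2
  have ht0 : ∀ i, (0 : ℝ) ≤ t i := fun i => hu.trans (htu i)
  have htmono : Monotone t := by
    intro i j hij
    have : (⟨min i n, Nat.lt_succ_of_le (min_le_right i n)⟩ : Fin (n + 1)) ≤
        ⟨min j n, Nat.lt_succ_of_le (min_le_right j n)⟩ := by
      simp only [Fin.mk_le_mk]
      exact min_le_min hij le_rfl
    exact Subtype.coe_le_coe.2 (e.monotone this)
  have hsurj : ∀ q ∈ G, ∃ i, i ≤ n ∧ t i = q := by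
    intro q hq
    obtain ⟨j, hj⟩ := e.surjective ⟨q, hq⟩
    refine ⟨(j : ℕ), Nat.lt_succ_iff.mp j.isLt, ?_⟩
    have : (⟨min (j : ℕ) n, Nat.lt_succ_of_le (min_le_right _ n)⟩ : Fin (n + 1)) = j := by
      apply Fin.ext
      simp [Nat.min_eq_left (Nat.lt_succ_iff.mp j.isLt)]
    rw [ht]
    simp only [this, hj]
  -- filtration
  set 𝒢 : Filtration ℕ inst :=
    { seq := fun i => ⨆ r ∈ Icc (0 : ℝ) (t i), MeasurableSpace.comap (B r) inferInstance
      mono' := by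
        intro i j hij
        exact iSup₂_le fun r hr =>
          le_iSup₂_of_le r ⟨hr.1, hr.2.trans (htmono hij)⟩ le_rfl
      le' := fun i => iSup₂_le fun r _ => (hmeas r).comap_le } with h𝒢
  have hm1 : ∀ {r : ℝ} {i : ℕ}, r ∈ Icc (0 : ℝ) (t i) → Measurable[𝒢 i] (B r) := by
    intro r i hr
    exact measurable_iff_comap_le.mpr (le_iSup₂_of_le r hr le_rfl)
  -- the submartingale
  set X : ℕ → Ω → ℝ := fun i ω => Real.exp (c * (B (t i) ω - B u ω)) with hX
  have hXmeas : ∀ i, StronglyMeasurable[𝒢 i] (X i) := by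
    intro i
    have h1 : Measurable[𝒢 i] fun ω => c * (B (t i) ω - B u ω) :=
      ((hm1 ⟨ht0 i, le_rfl⟩).sub (hm1 ⟨hu, htu i⟩)).const_mul c
    exact (Real.measurable_exp.comp h1).stronglyMeasurable
  have hXint : ∀ i, Integrable (X i) P := fun i =>
    (increment_exp P B hmeas hdist hu (htu i) c).1
  have hXpos : ∀ i ω, 0 < X i ω := fun i ω => Real.exp_pos _
  have hstep : ∀ i, X i ≤ᵐ[P] P[X (i + 1)|𝒢 i] := by
    intro i
    have hts : t i ≤ t (i + 1) := htmono (Nat.le_succ i)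
    set g : Ω → ℝ := fun ω => Real.exp (c * (B (t (i + 1)) ω - B (t i) ω)) with hg
    have hXsplit : X (i + 1) = X i * g := by
      funext ω
      simp only [hX, hg, Pi.mul_apply, ← Real.exp_add]
      congr 1
      ring
    have hg_int : Integrable g P := (increment_exp P B hmeas hdist (ht0 i) hts c).1
    have hmul_int : Integrable (X i * g) P := hXsplit ▸ hXint (i + 1)
    have hpull := condExp_mul_of_stronglyMeasurable_left (hXmeas i) hmul_int hg_int
    haveI : SigmaFinite (P.trim (𝒢.le i)) :=
      (isFiniteMeasure_trim (𝒢.le i)).toSigmaFinite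
    have hZcomap : Measurable[MeasurableSpace.comap
        (fun ω => B (t (i + 1)) ω - B (t i) ω) inferInstance]
        (fun ω => B (t (i + 1)) ω - B (t i) ω) := measurable_iff_comap_le.mpr le_rfl
    have hgsm : StronglyMeasurable[MeasurableSpace.comap
        (fun ω => B (t (i + 1)) ω - B (t i) ω) inferInstance] g :=
      ((Real.measurable_exp.comp (measurable_id.const_mul c)).comp hZcomap).stronglyMeasurable
    have hindZ := (hindep (t i) (t (i + 1)) (ht0 i) hts).symm
    have hcond := condExp_indep_eq
      (((hmeas (t (i + 1))).sub (hmeas (t i))).comap_le : _ ≤ inst) (𝒢.le i) hgsm hindZ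
    have hval : ∫ ω, g ω ∂P = Real.exp ((t (i + 1) - t i) * c ^ 2 / 2) :=
      (increment_exp P B hmeas hdist (ht0 i) hts c).2
    have hone : (1 : ℝ) ≤ ∫ ω, g ω ∂P := by
      rw [hval]
      exact Real.one_le_exp
        (div_nonneg (mul_nonneg (sub_nonneg.2 hts) (sq_nonneg c)) two_pos.le)
    have h1 : P[X (i + 1)|𝒢 i] =ᵐ[P] X i * P[g|𝒢 i] := by
      rw [hXsplit]; exact hpull
    filter_upwards [h1, hcond] with ω hω hω2
    rw [hω, Pi.mul_apply, hω2]
    calc X i ω = X i ω * 1 := (mul_one _).symm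
      _ ≤ X i ω * ∫ ω', g ω' ∂P := by
          exact mul_le_mul_of_nonneg_left hone (hXpos i ω).le
  have hsub : Submartingale X 𝒢 P := submartingale_nat hXmeas hXint hstep
  set ε : ℝ≥0 := Real.toNNReal (Real.exp (l * b)) with hε
  have hεcoe : (ε : ℝ) = Real.exp (l * b) := Real.coe_toNNReal _ (Real.exp_pos _).le
  have hXnn : (0 : ℕ → Ω → ℝ) ≤ X := fun i ω => (hXpos i ω).le
  have hdoob := maximal_ineq hsub hXnn (ε := ε) n
  set D := {ω | (ε : ℝ) ≤ (Finset.range (n + 1)).sup' Finset.nonempty_range_add_one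
    fun k => X k ω} with hD
  have hsubset : (⋃ q ∈ F, {ω | b ≤ σ * (B q ω - B u ω)}) ⊆ D := by
    intro ω hω
    simp only [mem_iUnion, mem_setOf_eq, exists_prop] at hω
    obtain ⟨q, hq, hbq⟩ := hω
    obtain ⟨i, hin, hti⟩ := hsurj q (Finset.mem_insert_of_mem hq)
    have h1 : Real.exp (l * b) ≤ X i ω := by
      rw [hX]
      simp only [hti]
      apply Real.exp_le_exp.mpr
      calc l * b ≤ l * (σ * (B q ω - B u ω)) := mul_le_mul_of_nonneg_left hbq hl0.le
        _ = c * (B q ω - B u ω) := by rw [hc]; ring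
    show (ε : ℝ) ≤ _
    rw [hεcoe]
    exact h1.trans (Finset.le_sup' (fun k => X k ω)
      (Finset.mem_range.mpr (Nat.lt_succ_of_le hin)))
  have hint2 : ∫ ω in D, X n ω ∂P ≤ Real.exp (S * l ^ 2 / 2) := by
    calc ∫ ω in D, X n ω ∂P ≤ ∫ ω, X n ω ∂P :=
          setIntegral_le_integral (hXint n) (ae_of_all _ fun ω => (hXpos n ω).le)
      _ = Real.exp ((t n - u) * c ^ 2 / 2) := (increment_exp P B hmeas hdist hu (htu n) c).2
      _ ≤ Real.exp (S * l ^ 2 / 2) := by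
          apply Real.exp_le_exp.mpr
          rw [hc2]
          have : t n - u ≤ S := by linarith [htS n]
          have hll : (0:ℝ) ≤ l ^ 2 / 2 := by positivity
          calc (t n - u) * l ^ 2 / 2 = (t n - u) * (l ^ 2 / 2) := by ring
            _ ≤ S * (l ^ 2 / 2) := mul_le_mul_of_nonneg_right this hll
            _ = S * l ^ 2 / 2 := by ring
  have h2 : (ε : ℝ≥0∞) * P D ≤ ENNReal.ofReal (Real.exp (S * l ^ 2 / 2)) := by
    refine le_trans ?_ (le_trans hdoob (ENNReal.ofReal_le_ofReal hint2))
    exact le_rfl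
  have hεne : (ε : ℝ≥0∞) ≠ 0 := by
    simp only [ne_eq, ENNReal.coe_eq_zero, hε, Real.toNNReal_eq_zero, not_le]
    exact Real.exp_pos _
  have h3 : P D ≤ ENNReal.ofReal (Real.exp (S * l ^ 2 / 2)) / (ε : ℝ≥0∞) :=
    (ENNReal.le_div_iff_mul_le (Or.inl hεne) (Or.inl ENNReal.coe_ne_top)).mpr
      (by rw [mul_comm]; exact h2)
  refine le_trans (measure_mono hsubset) (h3.trans ?_)
  have hεofReal : (ε : ℝ≥0∞) = ENNReal.ofReal (Real.exp (l * b)) := rfl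
  rw [hεofReal, ← ENNReal.ofReal_div_of_pos (Real.exp_pos _), ← Real.exp_sub]
  apply le_of_eq
  congr 1
  rw [hl]
  field_simp
  ring

lemma twosided {Ω : Type*} [inst : MeasurableSpace Ω] (P : Measure Ω) [IsProbabilityMeasure P]
    (B : ℝ → Ω → ℝ) (hmeas : ∀ t : ℝ, Measurable (B t))
    (hindep : ∀ s t : ℝ, 0 ≤ s → s ≤ t →
      Indep (⨆ r ∈ Icc (0 : ℝ) s, MeasurableSpace.comap (B r) inferInstance)
        (MeasurableSpace.comap (fun ω => B t ω - B s ω) inferInstance) P)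
    (hdist : ∀ s t : ℝ, 0 ≤ s → s ≤ t →
      Measure.map (fun ω => B t ω - B s ω) P = gaussianReal 0 (Real.toNNReal (t - s)))
    {u S b : ℝ} (hu : 0 ≤ u) (hS : 0 < S) (hb : 0 < b)
    (F : Finset ℝ) (hF : ∀ q ∈ F, q ∈ Icc u (u + S)) :
    P (⋃ q ∈ F, {ω | b ≤ |B q ω - B u ω|}) ≤
      ENNReal.ofReal (2 * Real.exp (-b ^ 2 / (2 * S))) := by
  have hsubset : (⋃ q ∈ F, {ω | b ≤ |B q ω - B u ω|}) ⊆
      (⋃ q ∈ F, {ω | b ≤ (1 : ℝ) * (B q ω - B u ω)}) ∪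
      (⋃ q ∈ F, {ω | b ≤ (-1 : ℝ) * (B q ω - B u ω)}) := by
    intro ω hω
    simp only [mem_iUnion, mem_setOf_eq, exists_prop, mem_union] at hω ⊢
    obtain ⟨q, hq, hbq⟩ := hω
    rcases le_abs.mp hbq with h | h
    · exact Or.inl ⟨q, hq, by linarith⟩
    · exact Or.inr ⟨q, hq, by linarith⟩
  refine le_trans (measure_mono hsubset) (le_trans (measure_union_le _ _) ?_)
  have h1 := onesided P B hmeas hindep hdist hu hS hb (by norm_num : (1:ℝ)^2 = 1) F hF
  have h2 := onesided P B hmeas hindep hdist hu hS hb (by norm_num : (-1:ℝ)^2 = 1) F hF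
  calc _ ≤ ENNReal.ofReal (Real.exp (-b ^ 2 / (2 * S))) +
        ENNReal.ofReal (Real.exp (-b ^ 2 / (2 * S))) := add_le_add h1 h2
    _ = ENNReal.ofReal (2 * Real.exp (-b ^ 2 / (2 * S))) := by
        rw [← ENNReal.ofReal_add (Real.exp_pos _).le (Real.exp_pos _).le]
        congr 1
        ring

lemma blockP {Ω : Type*} [inst : MeasurableSpace Ω] (P : Measure Ω) [IsProbabilityMeasure P]
    (B : ℝ → Ω → ℝ) (hmeas : ∀ t : ℝ, Measurable (B t))
    (hcont : ∀ ω, ContinuousOn (fun t => B t ω) (Ici (0 : ℝ)))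
    (hindep : ∀ s t : ℝ, 0 ≤ s → s ≤ t →
      Indep (⨆ r ∈ Icc (0 : ℝ) s, MeasurableSpace.comap (B r) inferInstance)
        (MeasurableSpace.comap (fun ω => B t ω - B s ω) inferInstance) P)
    (hdist : ∀ s t : ℝ, 0 ≤ s → s ≤ t →
      Measure.map (fun ω => B t ω - B s ω) P = gaussianReal 0 (Real.toNNReal (t - s)))
    {u S b : ℝ} (hu : 0 ≤ u) (hS : 0 < S) (hb : 0 < b) :
    P {ω | ∃ t ∈ Icc u (u + S), b < |B t ω - B u ω|} ≤
      ENNReal.ofReal (2 * Real.exp (-b ^ 2 / (2 * S))) := by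
  classical
  set eq : ℕ ≃ ℚ := (Denumerable.eqv ℚ).symm with heq
  set C : ℕ → ℝ := fun m => max u (min ((eq m : ℚ) : ℝ) (u + S)) with hC
  have hCmem : ∀ m, C m ∈ Icc u (u + S) := by
    intro m
    constructor
    · exact le_max_left _ _
    · exact max_le (le_add_of_nonneg_right hS.le) (min_le_right _ _)
  set Sm : ℕ → Set Ω := fun m => {ω | b ≤ |B (C m) ω - B u ω|} with hSm
  have hSmeas : ∀ m, MeasurableSet (Sm m) := by
    intro m
    exact measurableSet_le measurable_const ((hmeas (C m)).sub (hmeas u)).abs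
  have hsubset : {ω | ∃ t ∈ Icc u (u + S), b < |B t ω - B u ω|} ⊆ ⋃ m, Sm m := by
    intro ω hω
    obtain ⟨t, ⟨htu, htS⟩, hbt⟩ := hω
    have ht0 : t ∈ Ici (0:ℝ) := hu.trans htu
    have hgc : ContinuousWithinAt (fun r => |B r ω - B u ω|) (Ici (0:ℝ)) t :=
      (((hcont ω).continuousWithinAt ht0).sub continuousWithinAt_const).abs
    have hev : {r | b < |B r ω - B u ω|} ∈ nhdsWithin t (Ici (0:ℝ)) :=
      hgc (Ioi_mem_nhds hbt)
    obtain ⟨δ, hδ, hball⟩ := Metric.mem_nhdsWithin_iff.mp hev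
    obtain ⟨x, hx1, hx2⟩ := exists_rat_btwn (show max u (t - δ) < min (u + S) (t + δ) by
      simp only [max_lt_iff, lt_min_iff]
      refine ⟨⟨?_, ?_⟩, ⟨?_, ?_⟩⟩ <;> linarith)
    simp only [max_lt_iff, lt_min_iff] at hx1 hx2
    set m : ℕ := eq.symm x with hm
    have hCx : C m = (x : ℝ) := by
      rw [hC]
      simp only [hm, Equiv.apply_symm_apply]
      rw [min_eq_left (le_of_lt hx2.1), max_eq_right (le_of_lt hx1.1)]
    have hxball : (x : ℝ) ∈ Metric.ball t δ ∩ Ici (0:ℝ) := by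
      constructor
      · rw [Metric.mem_ball, Real.dist_eq, abs_sub_lt_iff]
        constructor <;> linarith
      · exact le_of_lt (lt_of_le_of_lt hu hx1.1)
    have := hball hxball
    exact mem_iUnion.mpr ⟨m, by
      have h2 : b < |B (C m) ω - B u ω| := by rw [hCx]; exact this
      exact le_of_lt h2⟩
  refine le_trans (measure_mono hsubset) ?_
  set K : ℕ → Set Ω := fun k => ⋃ m ∈ Finset.range k, Sm m with hK
  have hUnion : (⋃ m, Sm m) = ⋃ k, K k := by
    ext ω
    simp only [mem_iUnion, hK, Finset.mem_range, exists_prop]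
    exact ⟨fun ⟨m, h⟩ => ⟨m + 1, m, Nat.lt_succ_self m, h⟩, fun ⟨k, m, _, h⟩ => ⟨m, h⟩⟩
  have hKmono : Monotone K := by
    intro i j hij
    exact iUnion₂_mono' fun m hm => ⟨m, Finset.mem_range.mpr
      (lt_of_lt_of_le (Finset.mem_range.mp hm) hij), subset_rfl⟩
  rw [hUnion, hKmono.measure_iUnion]
  refine iSup_le fun k => ?_
  have hKF : K k = ⋃ q ∈ (Finset.range k).image C, {ω | b ≤ |B q ω - B u ω|} := by
    ext ω
    simp only [hK, mem_iUnion, exists_prop, Finset.mem_image, Finset.mem_range]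
    constructor
    · rintro ⟨m, hm, h⟩; exact ⟨C m, ⟨m, hm, rfl⟩, h⟩
    · rintro ⟨q, ⟨m, hm, rfl⟩, h⟩; exact ⟨m, hm, h⟩
  rw [hKF]
  exact twosided P B hmeas hindep hdist hu hS hb _ (by
    intro q hq
    obtain ⟨m, _, rfl⟩ := Finset.mem_image.mp hq
    exact hCmem m)

/-- (Oscillations of Brownian motion.) If `B` is a standard real
Brownian motion, then for all `S, T, A > 0`:
`ℙ( sup{|B(t) − B(s)| : 0 ≤ s,t ≤ T, |t−s| ≤ S} ≥ A ) ≤ 2 ⌈T/S⌉ exp(−A²/(18S))`. -/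
theorem stmt13
    {Ω : Type*} [MeasurableSpace Ω] (P : Measure Ω) [IsProbabilityMeasure P]
    (B : ℝ → Ω → ℝ)
    (hmeas : ∀ t : ℝ, Measurable (B t))
    (hcont : ∀ ω, ContinuousOn (fun t => B t ω) (Ici (0 : ℝ)))
    (h0 : ∀ᵐ ω ∂P, B 0 ω = 0)
    (hindep : ∀ s t : ℝ, 0 ≤ s → s ≤ t →
      Indep (⨆ r ∈ Icc (0 : ℝ) s, MeasurableSpace.comap (B r) inferInstance)
        (MeasurableSpace.comap (fun ω => B t ω - B s ω) inferInstance) P)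
    (hdist : ∀ s t : ℝ, 0 ≤ s → s ≤ t →
      Measure.map (fun ω => B t ω - B s ω) P = gaussianReal 0 (Real.toNNReal (t - s))) :
    ∀ S T A : ℝ, 0 < S → 0 < T → 0 < A →
      P {ω | ENNReal.ofReal A ≤
          ⨆ s ∈ Icc (0 : ℝ) T, ⨆ t ∈ Icc (0 : ℝ) T, ⨆ (_ : |t - s| ≤ S),
            ENNReal.ofReal |B t ω - B s ω|}
        ≤ ENNReal.ofReal (2 * (⌈T / S⌉ : ℝ) * Real.exp (-(A ^ 2) / (18 * S))) := by
  intro S T A hS hT hA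
  set E := {ω | ENNReal.ofReal A ≤
      ⨆ s ∈ Icc (0 : ℝ) T, ⨆ t ∈ Icc (0 : ℝ) T, ⨆ (_ : |t - s| ≤ S),
        ENNReal.ofReal |B t ω - B s ω|} with hE
  set N : ℕ := (⌈T / S⌉).toNat with hN
  have hTS : 0 < T / S := div_pos hT hS
  have hceil : (0 : ℤ) < ⌈T / S⌉ := Int.ceil_pos.mpr hTS
  have hNZ : ((N : ℤ)) = ⌈T / S⌉ := Int.toNat_of_nonneg hceil.le
  have hNR : ((N : ℝ)) = ((⌈T / S⌉ : ℤ) : ℝ) := by exact_mod_cast congrArg (Int.cast : ℤ → ℝ) hNZ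
  have hTleNS : T ≤ (N : ℝ) * S := by
    have h1 : T / S ≤ ((⌈T / S⌉ : ℤ) : ℝ) := Int.le_ceil _
    rw [← hNR] at h1
    calc T = T / S * S := by field_simp
      _ ≤ (N : ℝ) * S := mul_le_mul_of_nonneg_right h1 hS.le
  have key : ∀ a : ℝ, 0 < a → a < A →
      P E ≤ ENNReal.ofReal (2 * (N : ℝ) * Real.exp (-(a ^ 2) / (18 * S))) := by
    intro a ha haA
    set b : ℝ := a / 3 with hbdef
    have hb : 0 < b := by positivity
    set H : ℕ → Set Ω := fun k =>
      {ω | ∃ t ∈ Icc ((k : ℝ) * S) ((k : ℝ) * S + S), b < |B t ω - B ((k : ℝ) * S) ω|} with hH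
    have hsubset : E ⊆ ⋃ k ∈ Finset.range N, H k := by
      intro ω hω
      rw [hE, mem_setOf_eq] at hω
      have h1 : ENNReal.ofReal a < ⨆ s ∈ Icc (0 : ℝ) T, ⨆ t ∈ Icc (0 : ℝ) T,
          ⨆ (_ : |t - s| ≤ S), ENNReal.ofReal |B t ω - B s ω| :=
        lt_of_lt_of_le ((ENNReal.ofReal_lt_ofReal_iff hA).mpr haA) hω
      simp only [lt_iSup_iff] at h1
      obtain ⟨s₀, hs₀, t₀, ht₀, hst₀, hlt₀⟩ := h1
      have hablt : a < |B t₀ ω - B s₀ ω| := by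
        by_contra hcon
        push_neg at hcon
        exact absurd (ENNReal.ofReal_le_ofReal hcon) (not_le.mpr hlt₀)
      -- order s ≤ t
      obtain ⟨s, t, hs0, hst, htT, hsub1, habs⟩ :
          ∃ s t : ℝ, 0 ≤ s ∧ s ≤ t ∧ t ≤ T ∧ t - s ≤ S ∧ a < |B t ω - B s ω| := by
        rcases le_total s₀ t₀ with h | h
        · exact ⟨s₀, t₀, hs₀.1, h, ht₀.2, by rw [abs_of_nonneg (by linarith)] at hst₀; linarith,
            hablt⟩
        · exact ⟨t₀, s₀, ht₀.1, h, hs₀.2, by rw [abs_of_nonpos (by linarith)] at hst₀; linarith,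
            by rw [abs_sub_comm]; exact hablt⟩
      have hsltt : s < t := by
        rcases eq_or_lt_of_le hst with rfl | h
        · simp at habs; linarith
        · exact h
      set k : ℕ := (⌊s / S⌋).toNat with hk
      have hfl0 : (0 : ℤ) ≤ ⌊s / S⌋ := Int.floor_nonneg.mpr (div_nonneg hs0 hS.le)
      have hkZ : ((k : ℤ)) = ⌊s / S⌋ := Int.toNat_of_nonneg hfl0
      have hkR : ((k : ℝ)) = ((⌊s / S⌋ : ℤ) : ℝ) := by exact_mod_cast congrArg (Int.cast : ℤ → ℝ) hkZ
      have hks : (k : ℝ) * S ≤ s := by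
        have h1 : ((⌊s / S⌋ : ℤ) : ℝ) ≤ s / S := Int.floor_le _
        rw [← hkR] at h1
        calc (k : ℝ) * S ≤ s / S * S := mul_le_mul_of_nonneg_right h1 hS.le
          _ = s := by field_simp
      have hsk1 : s < (k : ℝ) * S + S := by
        have h1 : s / S < ((⌊s / S⌋ : ℤ) : ℝ) + 1 := Int.lt_floor_add_one _
        rw [← hkR] at h1
        have := (div_lt_iff₀ hS).mp h1
        linarith [this]
      have hkN : k < N := by
        have h1 : (k : ℝ) * S ≤ s := hks
        have h2 : (k : ℝ) * S < T := lt_of_le_of_lt h1 (lt_of_lt_of_le hsltt htT)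
        have h3 : (k : ℝ) < (N : ℝ) := by
          by_contra hcon
          push_neg at hcon
          have : (N : ℝ) * S ≤ (k : ℝ) * S := mul_le_mul_of_nonneg_right hcon hS.le
          linarith
        exact_mod_cast h3
      simp only [mem_iUnion, exists_prop, Finset.mem_range]
      by_cases hcase : t ≤ (k : ℝ) * S + S
      · -- same block
        have htri : |B t ω - B s ω| ≤
            |B t ω - B ((k : ℝ) * S) ω| + |B s ω - B ((k : ℝ) * S) ω| := by
          have : B t ω - B s ω = (B t ω - B ((k : ℝ) * S) ω) - (B s ω - B ((k : ℝ) * S) ω) := by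
            ring
          rw [this]
          exact abs_sub _ _
        rcases lt_or_ge b |B t ω - B ((k : ℝ) * S) ω| with h | h
        · exact ⟨k, hkN, t, ⟨hks.trans hst, hcase⟩, h⟩
        · refine ⟨k, hkN, s, ⟨hks, hsk1.le⟩, ?_⟩
          rw [hbdef] at h ⊢
          linarith
      · -- straddling two blocks
        push_neg at hcase
        set v : ℝ := (k : ℝ) * S + S with hv
        have htv : t ≤ v + S := by
          have : s ≤ v := hsk1.le
          linarith
        have htri : |B t ω - B s ω| ≤
            |B t ω - B v ω| + |B v ω - B ((k : ℝ) * S) ω| + |B s ω - B ((k : ℝ) * S) ω| := by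
          have h1 : B t ω - B s ω = (B t ω - B v ω) + (B v ω - B ((k : ℝ) * S) ω)
              - (B s ω - B ((k : ℝ) * S) ω) := by ring
          rw [h1]
          calc |(B t ω - B v ω) + (B v ω - B ((k : ℝ) * S) ω) - (B s ω - B ((k : ℝ) * S) ω)|
              ≤ |(B t ω - B v ω) + (B v ω - B ((k : ℝ) * S) ω)| + |B s ω - B ((k : ℝ) * S) ω| :=
                abs_sub _ _
            _ ≤ |B t ω - B v ω| + |B v ω - B ((k : ℝ) * S) ω| + |B s ω - B ((k : ℝ) * S) ω| := by
                have := abs_add_le (B t ω - B v ω) (B v ω - B ((k : ℝ) * S) ω)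
                linarith
        have hk1N : k + 1 < N := by
          have h2 : v < T := lt_of_lt_of_le hcase htT
          have h3 : ((k : ℝ) + 1) * S < (N : ℝ) * S := by
            calc ((k : ℝ) + 1) * S = v := by rw [hv]; ring
              _ < T := h2
              _ ≤ (N : ℝ) * S := hTleNS
          have h4 : ((k : ℝ) + 1) < (N : ℝ) := lt_of_mul_lt_mul_right h3 hS.le
          exact_mod_cast h4
        rcases lt_or_ge b |B t ω - B v ω| with h | h
        · refine ⟨k + 1, hk1N, t, ⟨?_, ?_⟩, ?_⟩
          · push_cast; rw [hv] at hcase; linarith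
          · push_cast; rw [hv] at htv; linarith
          · have hvv : ((k + 1 : ℕ) : ℝ) * S = v := by push_cast; rw [hv]; ring
            rw [hvv]; exact h
        rcases lt_or_ge b |B v ω - B ((k : ℝ) * S) ω| with h2 | h2
        · exact ⟨k, hkN, v, ⟨by rw [hv]; linarith, by rw [hv]⟩, h2⟩
        · refine ⟨k, hkN, s, ⟨hks, hsk1.le⟩, ?_⟩
          rw [hbdef] at h h2 ⊢
          linarith
    have hHk : ∀ k : ℕ, P (H k) ≤ ENNReal.ofReal (2 * Real.exp (-b ^ 2 / (2 * S))) := by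
      intro k
      exact blockP P B hmeas hcont hindep hdist
        (mul_nonneg (Nat.cast_nonneg k) hS.le) hS hb
    calc P E ≤ P (⋃ k ∈ Finset.range N, H k) := measure_mono hsubset
      _ ≤ ∑ k ∈ Finset.range N, P (H k) := measure_biUnion_finset_le _ _
      _ ≤ ∑ _k ∈ Finset.range N, ENNReal.ofReal (2 * Real.exp (-b ^ 2 / (2 * S))) :=
          Finset.sum_le_sum fun k _ => hHk k
      _ = (N : ℝ≥0∞) * ENNReal.ofReal (2 * Real.exp (-b ^ 2 / (2 * S))) := by
          rw [Finset.sum_const, Finset.card_range, nsmul_eq_mul]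
      _ = ENNReal.ofReal (2 * (N : ℝ) * Real.exp (-(a ^ 2) / (18 * S))) := by
          rw [← ENNReal.ofReal_natCast N, ← ENNReal.ofReal_mul (Nat.cast_nonneg N)]
          congr 1
          have harg : -b ^ 2 / (2 * S) = -(a ^ 2) / (18 * S) := by
            rw [hbdef]; field_simp; ring
          rw [harg]; ring
  -- limit a → A
  have htend : Filter.Tendsto (fun j : ℕ => ENNReal.ofReal
      (2 * (N : ℝ) * Real.exp (-((A - A / (j + 2)) ^ 2) / (18 * S)))) Filter.atTop
      (nhds (ENNReal.ofReal (2 * (N : ℝ) * Real.exp (-(A ^ 2) / (18 * S))))) := by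
    have h1 : Filter.Tendsto (fun j : ℕ => A - A / (j + 2)) Filter.atTop (nhds A) := by
      have h2 : Filter.Tendsto (fun j : ℕ => A / (j + 2)) Filter.atTop (nhds 0) := by
        apply Filter.Tendsto.div_atTop tendsto_const_nhds
        exact Filter.tendsto_atTop_add_const_right _ 2 tendsto_natCast_atTop_atTop
      have := Filter.Tendsto.sub (tendsto_const_nhds (x := A)) h2
      simpa using this
    have h3 : Continuous fun x : ℝ => ENNReal.ofReal (2 * (N : ℝ) * Real.exp (-(x ^ 2) / (18 * S))) := by
      exact ENNReal.continuous_ofReal.comp (continuous_const.mul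
        (Real.continuous_exp.comp (((continuous_pow 2).neg).div_const (18 * S))))
    exact (h3.tendsto A).comp h1
  rw [show ((⌈T / S⌉ : ℤ) : ℝ) = (N : ℝ) from hNR.symm]
  refine ge_of_tendsto htend (Filter.Eventually.of_forall fun j => ?_)
  refine key (A - A / (j + 2)) ?_ ?_
  · have h1 : A / ((j : ℝ) + 2) < A := by
      apply div_lt_self hA
      have : (0 : ℝ) ≤ (j : ℝ) := Nat.cast_nonneg j
      linarith
    linarith
  · have h1 : 0 < A / ((j : ℝ) + 2) := by
      apply div_pos hA
      have : (0 : ℝ) ≤ (j : ℝ) := Nat.cast_nonneg j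
      linarith
    linarith
end

section
/- Let E₁ and E₂ be complete separable metric spaces (equipped with their Borel σ-algebras), let μ be a probability measure on E₁ × E₂, and let μ₁ denote the first marginal of μ. Then there exists a measurable function G : E₁ × (0,1) → E₂ such that if X₁ and V are independent random variables with X₁ ∼ μ₁ and V uniformly distributed on (0,1), then the pair (X₁, G(X₁, V)) has distribution μ; equivalently, the pushforward of the product measure μ₁ ⊗ Unif(0,1) under the map (x, v) ↦ (x, G(x, v)) equals μ. -/
open Set MeasureTheory Filter Topology ProbabilityTheory
open scoped ENNReal

lemma stmt14_aux_real {E₁ : Type*} [MeasurableSpace E₁]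
    (ν : Measure (E₁ × ℝ)) [IsProbabilityMeasure ν] :
    ∃ G : E₁ × ℝ → ℝ, Measurable G ∧
      Measure.map (fun p : E₁ × ℝ => (p.1, G p))
        ((ν.map Prod.fst).prod (volume.restrict (Ioo (0 : ℝ) 1))) = ν := by
  set U : Measure ℝ := volume.restrict (Ioo (0 : ℝ) 1) with hU
  haveI hUprob : IsProbabilityMeasure U := by
    constructor
    rw [hU, Measure.restrict_apply_univ, Real.volume_Ioo]
    norm_num
  set κ := ν.condKernel with hκ
  -- the CDF of the conditional kernel
  set F : E₁ → ℝ → ℝ := fun x t => (κ x (Iic t)).toReal with hF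
  have hFmeas : ∀ t, Measurable fun x => F x t := fun t =>
    (ProbabilityTheory.Kernel.measurable_coe κ measurableSet_Iic).ennreal_toReal
  have hFmono : ∀ x, Monotone (F x) := by
    intro x s t hst
    exact ENNReal.toReal_mono (measure_ne_top _ _) (measure_mono (Iic_subset_Iic.2 hst))
  have hF_le_one : ∀ x t, F x t ≤ 1 := by
    intro x t
    rw [hF]
    simp only
    rw [show (1 : ℝ) = (1 : ℝ≥0∞).toReal by simp]
    exact ENNReal.toReal_mono ENNReal.one_ne_top prob_le_one
  have hF_nonneg : ∀ x t, 0 ≤ F x t := fun x t => ENNReal.toReal_nonneg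
  -- limits of the CDF
  have h_top : ∀ x, Tendsto (fun n : ℕ => F x n) atTop (𝓝 1) := by
    intro x
    have h1 : Tendsto (fun n : ℕ => κ x (Iic (n : ℝ))) atTop (𝓝 (κ x (⋃ n : ℕ, Iic (n : ℝ)))) :=
      tendsto_measure_iUnion_atTop (fun n m hnm => Iic_subset_Iic.2 (by exact_mod_cast hnm))
    have h2 : (⋃ n : ℕ, Iic ((n : ℝ))) = univ := by
      ext r
      simp only [mem_iUnion, mem_Iic, mem_univ, iff_true]
      exact exists_nat_ge r
    rw [h2, measure_univ] at h1
    have := (ENNReal.tendsto_toReal (a := 1) ENNReal.one_ne_top).comp h1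
    simpa [hF, Function.comp_def] using this
  have h_bot : ∀ x, Tendsto (fun n : ℕ => F x (-(n : ℝ))) atTop (𝓝 0) := by
    intro x
    have h1 : Tendsto (fun n : ℕ => κ x (Iic (-(n : ℝ)))) atTop
        (𝓝 (κ x (⋂ n : ℕ, Iic (-(n : ℝ))))) := by
      refine tendsto_measure_iInter_atTop (fun n => measurableSet_Iic.nullMeasurableSet)
        (fun n m hnm => Iic_subset_Iic.2 (by exact_mod_cast neg_le_neg (Nat.cast_le.2 hnm)))
        ⟨0, measure_ne_top _ _⟩
    have h2 : (⋂ n : ℕ, Iic (-(n : ℝ))) = (∅ : Set ℝ) := by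
      refine eq_empty_of_forall_notMem fun r hr => ?_
      simp only [mem_iInter, mem_Iic] at hr
      obtain ⟨n, hn⟩ := exists_nat_gt (-r)
      exact absurd (hr n) (by linarith)
    rw [h2, measure_empty] at h1
    have := (ENNReal.tendsto_toReal (a := 0) (by simp)).comp h1
    simpa [hF, Function.comp_def] using this
  -- the quantile function
  set Q : E₁ → ℝ → ℝ := fun x v => sInf {t : ℝ | v ≤ F x t} with hQdef
  have hkey : ∀ x, ∀ v ∈ Ioo (0 : ℝ) 1, ∀ t, (Q x v ≤ t ↔ v ≤ F x t) := by
    intro x v hv t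
    obtain ⟨hv0, hv1⟩ := hv
    have hne : {t : ℝ | v ≤ F x t}.Nonempty := by
      obtain ⟨n, hn⟩ := ((h_top x).eventually (eventually_ge_nhds hv1)).exists
      exact ⟨n, hn⟩
    have hbdd : BddBelow {t : ℝ | v ≤ F x t} := by
      obtain ⟨n, hn⟩ := ((h_bot x).eventually (eventually_lt_nhds hv0)).exists
      refine ⟨-(n : ℝ), fun s hs => ?_⟩
      by_contra hcon
      push_neg at hcon
      exact absurd (le_trans hs (hFmono x hcon.le)) (not_le.2 hn)
    constructor
    · intro hQt
      -- right continuity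
      have hseq : ∀ n : ℕ, v ≤ F x (t + 1 / (n + 1)) := by
        intro n
        have hlt : Q x v < t + 1 / (n + 1) :=
          lt_of_le_of_lt hQt (lt_add_of_pos_right t (by positivity))
        obtain ⟨s, hs, hst⟩ := exists_lt_of_csInf_lt hne hlt
        exact le_trans hs (hFmono x hst.le)
      have h1 : Tendsto (fun n : ℕ => κ x (Iic (t + 1 / (n + 1)))) atTop
          (𝓝 (κ x (⋂ n : ℕ, Iic (t + 1 / ((n : ℝ) + 1))))) := by
        refine tendsto_measure_iInter_atTop (fun n => measurableSet_Iic.nullMeasurableSet)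
          (fun n m hnm => Iic_subset_Iic.2 ?_) ⟨0, measure_ne_top _ _⟩
        have : (1 : ℝ) / (m + 1) ≤ 1 / (n + 1) := by
          apply one_div_le_one_div_of_le (by positivity)
          exact_mod_cast Nat.succ_le_succ hnm
        linarith
      have h2 : (⋂ n : ℕ, Iic (t + 1 / ((n : ℝ) + 1))) = Iic t := by
        ext r
        simp only [mem_iInter, mem_Iic]
        constructor
        · intro h
          refine le_of_forall_pos_le_add fun ε hε => ?_
          obtain ⟨n, hn⟩ := exists_nat_one_div_lt hε
          exact le_trans (h n) (by linarith)
        · intro h n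
          have : (0 : ℝ) < 1 / (n + 1) := by positivity
          linarith
      rw [h2] at h1
      have h3 : Tendsto (fun n : ℕ => F x (t + 1 / (n + 1))) atTop (𝓝 (F x t)) :=
        (ENNReal.tendsto_toReal (measure_ne_top _ _)).comp h1
      exact ge_of_tendsto' h3 hseq
    · intro hvF
      exact csInf_le hbdd hvF
  -- clamping
  set clamp : ℝ → ℝ := fun v => if v ∈ Ioo (0 : ℝ) 1 then v else 1 / 2 with hclampdef
  have hclamp_mem : ∀ v, clamp v ∈ Ioo (0 : ℝ) 1 := by
    intro v
    rw [hclampdef]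
    by_cases h : v ∈ Ioo (0 : ℝ) 1 <;> simp [h]
    norm_num
  have hclamp_meas : Measurable clamp :=
    Measurable.ite measurableSet_Ioo measurable_id measurable_const
  set G : E₁ × ℝ → ℝ := fun p => Q p.1 (clamp p.2) with hGdef
  have hGmeas : Measurable G := by
    apply measurable_of_Iic
    intro t
    have : G ⁻¹' Iic t = {p : E₁ × ℝ | clamp p.2 ≤ F p.1 t} := by
      ext p
      simp only [mem_preimage, mem_Iic, mem_setOf_eq, hGdef]
      exact hkey p.1 (clamp p.2) (hclamp_mem p.2) t
    rw [this]
    exact measurableSet_le (hclamp_meas.comp measurable_snd) ((hFmeas t).comp measurable_fst)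
  -- pushforward of the uniform measure under the quantile
  have hmap : ∀ x, Measure.map (fun v => G (x, v)) U = κ x := by
    intro x
    have hGx : Measurable fun v => G (x, v) := hGmeas.comp measurable_prodMk_left
    refine Measure.ext_of_Iic _ _ fun t => ?_
    rw [Measure.map_apply hGx measurableSet_Iic, hU, Measure.restrict_apply
      (hGx measurableSet_Iic)]
    have hset : (fun v => G (x, v)) ⁻¹' Iic t ∩ Ioo 0 1 = Iic (F x t) ∩ Ioo 0 1 := by
      ext v
      simp only [mem_inter_iff, mem_preimage, mem_Iic, mem_Ioo, and_congr_left_iff]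
      intro hv
      have hcv : clamp v = v := by rw [hclampdef]; simp [mem_Ioo.2 hv]
      rw [hGdef]
      simp only
      rw [hcv]
      exact hkey x v (mem_Ioo.2 hv) t
    rw [hset]
    have hsub1 : Iic (F x t) ∩ Ioo 0 1 ⊆ Ioc 0 (F x t) := fun v hv => ⟨hv.2.1, hv.1⟩
    have hsub2 : Ioo 0 (F x t) ⊆ Iic (F x t) ∩ Ioo 0 1 := by
      intro v hv
      obtain ⟨h1, h2⟩ := mem_Ioo.1 hv
      exact ⟨le_of_lt h2, h1, lt_of_lt_of_le h2 (hF_le_one x t)⟩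
    have h1 := measure_mono (μ := volume) hsub1
    have h2 := measure_mono (μ := volume) hsub2
    rw [Real.volume_Ioc, sub_zero] at h1
    rw [Real.volume_Ioo, sub_zero] at h2
    rw [le_antisymm h1 h2, hF]
    exact ENNReal.ofReal_toReal (measure_ne_top _ _)
  -- assemble
  refine ⟨G, hGmeas, ?_⟩
  have hfst : ν.map Prod.fst = ν.fst := rfl
  have hpairmeas : Measurable fun p : E₁ × ℝ => (p.1, G p) := measurable_fst.prodMk hGmeas
  haveI : IsProbabilityMeasure ((ν.map Prod.fst).prod U) := by
    rw [hfst]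
    infer_instance
  haveI : IsProbabilityMeasure
      (Measure.map (fun p : E₁ × ℝ => (p.1, G p)) ((ν.map Prod.fst).prod U)) :=
    Measure.isProbabilityMeasure_map hpairmeas.aemeasurable
  have hdis : ν.fst ⊗ₘ κ = ν := ν.disintegrate κ
  rw [hfst]
  haveI : IsProbabilityMeasure (ν.fst.prod U) := by infer_instance
  haveI : IsProbabilityMeasure (Measure.map (fun p : E₁ × ℝ => (p.1, G p)) (ν.fst.prod U)) :=
    Measure.isProbabilityMeasure_map hpairmeas.aemeasurable
  haveI : IsProbabilityMeasure (ν.fst ⊗ₘ κ) := by rw [hdis]; infer_instance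
  have hgoal : Measure.map (fun p : E₁ × ℝ => (p.1, G p)) (ν.fst.prod U) = ν.fst ⊗ₘ κ := by
    refine ext_of_generate_finite _ generateFrom_prod.symm isPiSystem_prod ?_
      (by rw [measure_univ, measure_univ])
    rintro s ⟨s₁, hs₁, s₂, hs₂, rfl⟩
    simp only [mem_setOf_eq] at hs₁ hs₂
    rw [Measure.map_apply hpairmeas (hs₁.prod hs₂), Measure.compProd_apply_prod hs₁ hs₂]
    have hpre : (fun p : E₁ × ℝ => (p.1, G p)) ⁻¹' (s₁ ×ˢ s₂)
        = {p : E₁ × ℝ | p.1 ∈ s₁ ∧ G p ∈ s₂} := by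
      ext p; simp [Set.mem_prod]
    rw [hpre, Measure.prod_apply]
    swap
    · exact (measurable_fst hs₁).inter (hGmeas hs₂)
    have : ∀ x, U (Prod.mk x ⁻¹' {p : E₁ × ℝ | p.1 ∈ s₁ ∧ G p ∈ s₂})
        = s₁.indicator (fun x => κ x s₂) x := by
      intro x
      by_cases hx : x ∈ s₁
      · have : Prod.mk x ⁻¹' {p : E₁ × ℝ | p.1 ∈ s₁ ∧ G p ∈ s₂}
            = (fun v => G (x, v)) ⁻¹' s₂ := by
          ext v; simp [hx]
        rw [this, indicator_of_mem hx, ← hmap x,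
          Measure.map_apply (show Measurable fun v => G (x, v) from
            hGmeas.comp measurable_prodMk_left) hs₂]
      · have : Prod.mk x ⁻¹' {p : E₁ × ℝ | p.1 ∈ s₁ ∧ G p ∈ s₂} = (∅ : Set ℝ) := by
          ext v; simp [hx]
        rw [this, indicator_of_notMem hx, measure_empty]
    simp_rw [this]
    rw [lintegral_indicator hs₁]
  rw [hgoal, hdis]

/-- (Coupling lemma.) Let `E₁, E₂` be complete separable metric spaces
with their Borel σ-algebras, `μ` a probability measure on `E₁ × E₂`, and `μ₁` its first
marginal. There exists a measurable `G : E₁ × (0,1) → E₂` such that the pushforward of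
`μ₁ ⊗ Unif(0,1)` under `(x,v) ↦ (x, G(x,v))` equals `μ`. -/
theorem stmt14
    {E₁ E₂ : Type*}
    [MetricSpace E₁] [CompleteSpace E₁] [TopologicalSpace.SeparableSpace E₁]
    [MeasurableSpace E₁] [BorelSpace E₁]
    [MetricSpace E₂] [CompleteSpace E₂] [TopologicalSpace.SeparableSpace E₂]
    [MeasurableSpace E₂] [BorelSpace E₂]
    (μ : Measure (E₁ × E₂)) [IsProbabilityMeasure μ] :
    ∃ G : E₁ × ℝ → E₂, Measurable G ∧
      Measure.map (fun p : E₁ × ℝ => (p.1, G p))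
        ((μ.map Prod.fst).prod (volume.restrict (Ioo (0 : ℝ) 1))) = μ := by
  haveI : Nonempty (E₁ × E₂) := by
    by_contra h
    rw [not_nonempty_iff] at h
    have := measure_univ (μ := μ)
    rw [Set.univ_eq_empty_iff.mpr h, measure_empty] at this
    simp at this
  haveI : Nonempty E₂ := ⟨(Classical.arbitrary (E₁ × E₂)).2⟩
  haveI : StandardBorelSpace E₂ := inferInstance
  obtain ⟨f, hf⟩ := exists_measurableEmbedding_real E₂
  obtain ⟨r, hrm, hrf⟩ := hf.exists_measurable_extend (measurable_id (α := E₂))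
    fun _ => inferInstance
  have hmapf : Measurable (Prod.map (id : E₁ → E₁) f) := measurable_id.prodMap hf.measurable
  set ν : Measure (E₁ × ℝ) := μ.map (Prod.map id f) with hν
  haveI : IsProbabilityMeasure ν := Measure.isProbabilityMeasure_map hmapf.aemeasurable
  obtain ⟨G₀, hG₀m, hG₀⟩ := stmt14_aux_real ν
  have hfst : ν.map Prod.fst = μ.map Prod.fst := by
    rw [hν, Measure.map_map measurable_fst hmapf]
    rfl
  refine ⟨fun p => r (G₀ p), hrm.comp hG₀m, ?_⟩
  have hcomp : (fun p : E₁ × ℝ => (p.1, r (G₀ p)))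
      = (Prod.map (id : E₁ → E₁) r) ∘ (fun p : E₁ × ℝ => (p.1, G₀ p)) := rfl
  rw [hcomp, ← Measure.map_map (measurable_id.prodMap hrm) (measurable_fst.prodMk hG₀m),
    ← hfst, hG₀, hν, Measure.map_map (measurable_id.prodMap hrm) hmapf]
  have : (Prod.map (id : E₁ → E₁) r) ∘ (Prod.map (id : E₁ → E₁) f) = id := by
    funext p
    simp only [Function.comp_apply, Prod.map_apply, id_eq]
    exact Prod.ext rfl (congrFun hrf p.2)
  rw [this, Measure.map_id]
end

section
/- Fix δ > 0 and define T : 𝒰* → [0,∞] by T(x) = inf{ t ≥ 0 : ‖φ_x(t) − x*‖ < δ }. Then T(x) < ∞ for every x ∈ 𝒰*, the function T is upper semicontinuous on 𝒰*, and consequently T is bounded from above on every compact subset of 𝒰*. -/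
open Set Filter Polynomial

/-- Fix `δ > 0` and define `T : 𝒰* → [0,∞]` by
`T(x) = inf{t ≥ 0 : ‖φ_x(t) − x*‖ < δ}`. Then `T(x) < ∞` on `𝒰*`, `T` is upper
semicontinuous on `𝒰*`, and `T` is bounded above on every compact subset of `𝒰*`. -/
theorem stmt17
    (d : ℕ) (hd : 1 ≤ d)
    (U : Set (EuclideanSpace ℝ (Fin d))) (hU : IsOpen U)
    (F : EuclideanSpace ℝ (Fin d) → EuclideanSpace ℝ (Fin d))
    (J : EuclideanSpace ℝ (Fin d) → Matrix (Fin d) (Fin d) ℝ)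
    (hF : ContDiffOn ℝ 1 F U)
    (hJ : ∀ x ∈ U, HasFDerivAt F (Matrix.toEuclideanCLM (𝕜 := ℝ) (J x)) x)
    (hJlip : ∀ x ∈ U, ∃ ε > (0 : ℝ), ∃ L : ℝ,
      ∀ y ∈ Metric.ball x ε ∩ U, ∀ z ∈ Metric.ball x ε ∩ U,
        ‖Matrix.toEuclideanCLM (𝕜 := ℝ) (J y) - Matrix.toEuclideanCLM (𝕜 := ℝ) (J z)‖
          ≤ L * ‖y - z‖)
    (xstar : EuclideanSpace ℝ (Fin d)) (hxU : xstar ∈ U) (hFx : F xstar = 0)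
    (heig : ∀ μ : ℂ, (((J xstar).map (algebraMap ℝ ℂ)).charpoly).IsRoot μ → μ.re < 0)
    (ρstar : ℝ)
    (hρmem : ∃ μ : ℂ, (((J xstar).map (algebraMap ℝ ℂ)).charpoly).IsRoot μ ∧ ρstar = -μ.re)
    (hρmin : ∀ μ : ℂ, (((J xstar).map (algebraMap ℝ ℂ)).charpoly).IsRoot μ → ρstar ≤ -μ.re)
    (Ustar : Set (EuclideanSpace ℝ (Fin d))) (hUstarU : Ustar ⊆ U)
    (φ : EuclideanSpace ℝ (Fin d) → ℝ → EuclideanSpace ℝ (Fin d))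
    (hφ0 : ∀ x ∈ Ustar, φ x 0 = x)
    (hφmem : ∀ x ∈ Ustar, ∀ t ≥ (0 : ℝ), φ x t ∈ U)
    (hφode : ∀ x ∈ Ustar, ∀ t ≥ (0 : ℝ), HasDerivAt (φ x) (F (φ x t)) t)
    (hφlim : ∀ x ∈ Ustar, Tendsto (φ x) atTop (nhds xstar))
    (δ : ℝ) (hδ : 0 < δ)
    (T : EuclideanSpace ℝ (Fin d) → ENNReal)
    (hT : ∀ x, T x = ⨅ (t : ℝ) (_ : 0 ≤ t ∧ ‖φ x t - xstar‖ < δ), ENNReal.ofReal t) :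
    (∀ x ∈ Ustar, T x < ⊤) ∧
    UpperSemicontinuousOn T Ustar ∧
    (∀ D : Set (EuclideanSpace ℝ (Fin d)), D ⊆ Ustar → IsCompact D →
      ∃ M : ℝ, ∀ x ∈ D, T x ≤ ENNReal.ofReal M) := by
  -- Part 1: finiteness
  have hfin : ∀ x ∈ Ustar, T x < ⊤ := by
    intro x hx
    have hball : ∀ᶠ t in atTop, φ x t ∈ Metric.ball xstar δ :=
      (hφlim x hx).eventually_mem (Metric.ball_mem_nhds xstar hδ)
    obtain ⟨t, htb, ht0⟩ := (hball.and (eventually_ge_atTop (0:ℝ))).exists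
    rw [hT]
    refine lt_of_le_of_lt (iInf_le_of_le t (iInf_le_of_le ⟨ht0, ?_⟩ le_rfl))
      ENNReal.ofReal_lt_top
    rw [← dist_eq_norm]
    exact Metric.mem_ball.mp htb
  -- Part 2: upper semicontinuity
  have husc : UpperSemicontinuousOn T Ustar := by
    intro x hx c hc
    rw [hT x] at hc
    obtain ⟨t₀, ht₀⟩ := iInf_lt_iff.mp hc
    obtain ⟨⟨ht₀0, ht₀δ⟩, ht₀c⟩ := iInf_lt_iff.mp ht₀
    -- compact trajectory and its thickening
    have hK0 : IsCompact (φ x '' Icc 0 t₀) :=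
      isCompact_Icc.image_of_continuousOn
        (fun t ht => ((hφode x hx t ht.1).continuousAt).continuousWithinAt)
    have hK0U : φ x '' Icc 0 t₀ ⊆ U := by
      rintro _ ⟨t, ht, rfl⟩; exact hφmem x hx t ht.1
    obtain ⟨ε, hε, hεU⟩ := hK0.exists_cthickening_subset_open hU hK0U
    set C := Metric.cthickening ε (φ x '' Icc 0 t₀) with hCdef
    have hCc : IsCompact C := hK0.cthickening
    -- bound on the derivative on C
    have hfd : ContinuousOn (fun z => (Matrix.toEuclideanCLM (𝕜 := ℝ) (J z) :
        EuclideanSpace ℝ (Fin d) →L[ℝ] EuclideanSpace ℝ (Fin d))) U := by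
      have h1 : ContinuousOn (fderiv ℝ F) U := hF.continuousOn_fderiv_of_isOpen hU le_rfl
      exact h1.congr fun z hz => ((hJ z hz).fderiv).symm
    obtain ⟨M, hM⟩ := hCc.exists_bound_of_continuousOn (hfd.mono hεU)
    set K : NNReal := ⟨max M 0, le_max_right _ _⟩ with hKdef
    have hMK : ∀ z ∈ C, ‖(Matrix.toEuclideanCLM (𝕜 := ℝ) (J z) :
        EuclideanSpace ℝ (Fin d) →L[ℝ] EuclideanSpace ℝ (Fin d))‖₊ ≤ K := by
      intro z hz
      rw [← NNReal.coe_le_coe, coe_nnnorm]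
      exact (hM z hz).trans (le_max_left _ _)
    -- Lipschitz on each ball around the trajectory
    have hball_sub : ∀ s ∈ Icc (0:ℝ) t₀, Metric.ball (φ x s) ε ⊆ C := by
      intro s hs z hz
      exact Metric.mem_cthickening_of_dist_le z (φ x s) ε _ ⟨s, hs, rfl⟩
        (le_of_lt (Metric.mem_ball.mp hz))
    have hLip : ∀ s ∈ Icc (0:ℝ) t₀, LipschitzOnWith K F (Metric.ball (φ x s) ε) := by
      intro s hs
      exact Convex.lipschitzOnWith_of_nnnorm_hasFDerivWithin_le
        (fun z hz => (hJ z (hεU (hball_sub s hs hz))).hasFDerivWithinAt)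
        (fun z hz => hMK z (hball_sub s hs hz)) (convex_ball _ _)
    -- clamping function
    set cl : ℝ → ℝ := fun t => max 0 (min t t₀) with hcl
    have hclmem : ∀ t, cl t ∈ Icc (0:ℝ) t₀ :=
      fun t => ⟨le_max_left _ _, max_le ht₀0 (min_le_right _ _)⟩
    have hcleq : ∀ t ∈ Icc (0:ℝ) t₀, cl t = t := by
      intro t ht
      simp only [hcl]
      rw [min_eq_left ht.2, max_eq_right ht.1]
    -- small radius
    set ε' := min ε (δ - ‖φ x t₀ - xstar‖) with hε'def
    have hε'pos : 0 < ε' := lt_min hε (by linarith)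
    have hε'ε : ε' ≤ ε := min_le_left _ _
    set r := (ε'/2) * Real.exp (-((K:ℝ) + 1) * t₀) with hrdef
    have hrpos : 0 < r := by positivity
    have hexple : Real.exp (-((K:ℝ) + 1) * t₀) ≤ 1 := by
      rw [Real.exp_le_one_iff]
      have : (0:ℝ) ≤ ((K:ℝ) + 1) * t₀ := by positivity
      linarith
    have hrle : r ≤ ε'/2 := by
      rw [hrdef]
      nlinarith
    filter_upwards [inter_mem_nhdsWithin Ustar (Metric.ball_mem_nhds x hrpos)] with y hy
    obtain ⟨hyU, hyb⟩ := hy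
    have hdyx : dist y x < r := Metric.mem_ball.mp hyb
    have hdyx0 : 0 ≤ dist y x := dist_nonneg
    -- the good set
    set A := {s : ℝ | s ∈ Icc 0 t₀ ∧ ∀ u ∈ Icc 0 s, dist (φ y u) (φ x u) ≤ ε'/2} with hAdef
    have h0A : (0:ℝ) ∈ A := by
      refine ⟨⟨le_refl 0, ht₀0⟩, fun u hu => ?_⟩
      have hu0 : u = 0 := le_antisymm hu.2 hu.1
      subst hu0
      rw [hφ0 y hyU, hφ0 x hx]
      exact le_trans (le_of_lt hdyx) hrle
    have hAbdd : BddAbove A := ⟨t₀, fun s hs => hs.1.2⟩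
    have hAne : A.Nonempty := ⟨0, h0A⟩
    set t₁ := sSup A with ht₁def
    have ht₁0 : 0 ≤ t₁ := le_csSup hAbdd h0A
    have ht₁t₀ : t₁ ≤ t₀ := csSup_le hAne fun s hs => hs.1.2
    have hlt : ∀ u, 0 ≤ u → u < t₁ → dist (φ y u) (φ x u) ≤ ε'/2 := by
      intro u hu0 hut
      obtain ⟨s, hsA, hus⟩ := exists_lt_of_lt_csSup hAne hut
      exact hsA.2 u ⟨hu0, le_of_lt hus⟩
    -- Gronwall estimate up to time b ≤ t₀, given the trajectory stays in the balls
    have hgron : ∀ b, 0 ≤ b → b ≤ t₀ →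
        (∀ u, 0 ≤ u → u < b → dist (φ y u) (φ x u) ≤ ε'/2) →
        ∀ s ∈ Icc (0:ℝ) b, dist (φ y s) (φ x s) ≤ dist y x * Real.exp ((K:ℝ) * s) := by
      intro b hb0 hbt hmem
      have h := dist_le_of_trajectories_ODE_of_mem
        (v := fun _ z => F z) (s := fun t => Metric.ball (φ x (cl t)) ε) (K := K)
        (f := φ y) (g := φ x) (a := 0) (b := b) (δ := dist y x)
        (fun t _ => hLip (cl t) (hclmem t))
        (fun t ht => ((hφode y hyU t ht.1).continuousAt).continuousWithinAt)
        (fun t ht => (hφode y hyU t ht.1).hasDerivWithinAt)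
        (fun t ht => by
          have htI : t ∈ Icc (0:ℝ) t₀ := ⟨ht.1, le_trans (le_of_lt ht.2) hbt⟩
          show φ y t ∈ Metric.ball (φ x (cl t)) ε
          rw [hcleq t htI]
          exact Metric.mem_ball.mpr (lt_of_le_of_lt (hmem t ht.1 ht.2)
            (lt_of_lt_of_le (by linarith) hε'ε)))
        (fun t ht => ((hφode x hx t ht.1).continuousAt).continuousWithinAt)
        (fun t ht => (hφode x hx t ht.1).hasDerivWithinAt)
        (fun t ht => by
          have htI : t ∈ Icc (0:ℝ) t₀ := ⟨ht.1, le_trans (le_of_lt ht.2) hbt⟩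
          show φ x t ∈ Metric.ball (φ x (cl t)) ε
          rw [hcleq t htI]
          exact Metric.mem_ball_self hε)
        (by rw [hφ0 y hyU, hφ0 x hx])
      intro s hs
      have := h s hs
      simpa using this
    -- at t₁ the distance is strictly below ε'/2
    have hstrict : ∀ b, 0 ≤ b → b ≤ t₀ →
        (∀ u, 0 ≤ u → u < b → dist (φ y u) (φ x u) ≤ ε'/2) →
        dist (φ y b) (φ x b) < ε'/2 := by
      intro b hb0 hbt hmem
      have h1 := hgron b hb0 hbt hmem b ⟨hb0, le_refl b⟩
      have h2 : dist y x * Real.exp ((K:ℝ) * b) < r * Real.exp ((K:ℝ) * t₀) := by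
        have hK0' : (0:ℝ) ≤ (K:ℝ) := K.2
        have hexp : Real.exp ((K:ℝ) * b) ≤ Real.exp ((K:ℝ) * t₀) :=
          Real.exp_le_exp.mpr (by nlinarith)
        have hexppos : 0 < Real.exp ((K:ℝ) * b) := Real.exp_pos _
        nlinarith [Real.exp_pos ((K:ℝ) * t₀)]
      have h3 : r * Real.exp ((K:ℝ) * t₀) ≤ ε'/2 := by
        rw [hrdef, mul_assoc, ← Real.exp_add]
        have : -((K:ℝ) + 1) * t₀ + (K:ℝ) * t₀ = -t₀ := by ring
        rw [this]
        have h4 : Real.exp (-t₀) ≤ 1 := by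
          rw [Real.exp_le_one_iff]; linarith
        nlinarith
      linarith
    have ht₁A : dist (φ y t₁) (φ x t₁) < ε'/2 := hstrict t₁ ht₁0 ht₁t₀ hlt
    -- t₁ = t₀
    have ht₁eq : t₁ = t₀ := by
      by_contra hne
      have ht₁lt : t₁ < t₀ := lt_of_le_of_ne ht₁t₀ hne
      have hcont : ContinuousAt (fun u => dist (φ y u) (φ x u)) t₁ :=
        ((hφode y hyU t₁ ht₁0).continuousAt.dist (hφode x hx t₁ ht₁0).continuousAt)
      have hev : ∀ᶠ u in nhds t₁, dist (φ y u) (φ x u) < ε'/2 :=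
        hcont.eventually_lt_const ht₁A
      obtain ⟨η, hη, hηball⟩ := Metric.eventually_nhds_iff.mp hev
      set s := min t₀ (t₁ + η/2) with hsdef
      have hst₁ : t₁ < s := lt_min ht₁lt (by linarith)
      have hsA : s ∈ A := by
        refine ⟨⟨le_trans ht₁0 (le_of_lt hst₁), min_le_left _ _⟩, fun u hu => ?_⟩
        rcases le_or_gt u t₁ with h | h
        · rcases lt_or_eq_of_le h with h' | h'
          · exact hlt u hu.1 h'
          · rw [h']; exact le_of_lt ht₁A
        · have hus : u ≤ t₁ + η/2 := le_trans hu.2 (min_le_right _ _)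
          have : dist u t₁ < η := by
            rw [Real.dist_eq, abs_of_pos (by linarith)]
            linarith
          exact le_of_lt (hηball this)
      have := le_csSup hAbdd hsA
      linarith
    -- conclude
    have hfinal : ‖φ y t₀ - xstar‖ < δ := by
      have h1 : dist (φ y t₀) (φ x t₀) < ε'/2 := ht₁eq ▸ ht₁A
      have h2 : ε' ≤ δ - ‖φ x t₀ - xstar‖ := min_le_right _ _
      calc ‖φ y t₀ - xstar‖ ≤ ‖φ y t₀ - φ x t₀‖ + ‖φ x t₀ - xstar‖ := norm_sub_le_norm_sub_add_norm_sub _ _ _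
        _ < ε'/2 + ‖φ x t₀ - xstar‖ := by
            rw [← dist_eq_norm] ; linarith [h1]
        _ < δ := by linarith
    rw [hT y]
    exact lt_of_le_of_lt (iInf_le_of_le t₀ (iInf_le_of_le ⟨ht₀0, hfinal⟩ le_rfl)) ht₀c
  refine ⟨hfin, husc, ?_⟩
  -- Part 3: boundedness on compacts
  intro D hDU hDc
  have H : ∀ x ∈ D, ∃ V : Set (EuclideanSpace ℝ (Fin d)),
      V ∈ nhds x ∧ ∀ y ∈ V ∩ Ustar, T y < T x + 1 := by
    intro x hx
    have hTx : T x < T x + 1 :=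
      ENNReal.lt_add_right (ne_of_lt (hfin x (hDU hx))) one_ne_zero
    have := husc x (hDU hx) (T x + 1) hTx
    rw [eventually_nhdsWithin_iff] at this
    obtain ⟨V, hV1, hV2⟩ := eventually_iff_exists_mem.mp this
    exact ⟨V, hV1, fun y hy => hV2 y hy.1 hy.2⟩
  choose! V hVnhds hVlt using H
  obtain ⟨t, htD, htcov⟩ := hDc.elim_nhds_subcover V (fun x hx => hVnhds x hx)
  refine ⟨(t.sup fun x => (T x).toNNReal : NNReal) + 1, ?_⟩
  intro y hy
  obtain ⟨x, hxt, hyV⟩ := Set.mem_iUnion₂.mp (htcov hy)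
  have hxD : x ∈ D := htD x hxt
  have h1 : T y < T x + 1 := hVlt x hxD y ⟨hyV, hDU hy⟩
  have h2 : T x = ((T x).toNNReal : ENNReal) :=
    (ENNReal.coe_toNNReal (ne_of_lt (hfin x (hDU hxD)))).symm
  have h3 : ((T x).toNNReal : ENNReal) ≤ ((t.sup fun x => (T x).toNNReal : NNReal) : ENNReal) :=
    ENNReal.coe_le_coe.mpr (Finset.le_sup (f := fun x => (T x).toNNReal) hxt)
  have h4 : ENNReal.ofReal ((t.sup fun x => (T x).toNNReal : NNReal) + 1) =
      ((t.sup fun x => (T x).toNNReal : NNReal) : ENNReal) + 1 := by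
    rw [ENNReal.ofReal_add (by positivity) zero_le_one]
    simp [ENNReal.ofReal_coe_nnreal]
  rw [h4]
  calc T y ≤ T x + 1 := le_of_lt h1
    _ ≤ _ := by rw [h2]; exact add_le_add h3 le_rfl
end
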